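/- arXiv:2106.03681 — 4 statements merged into one kernel-verified Lean document; each statement's English description precedes it below -/
import Mathlib

section
/- Let (E,F) be a self-similar ends space. Then for all maximal points x, y ∈ M(E) and all clopen neighborhoods U of x and V of y, there exists a homeomorphism of pairs φ from (U, U ∩ F) to (V, V ∩ F) such that φ(x) = y. -/
set_option linter.unusedSectionVars false
set_option linter.unusedVariables false
set_option maxHeartbeats 1000000


section EndsSpace

variable {E : Type*} [TopologicalSpace E]

/-- A homeomorphism of pairs from `(A, A ∩ F)` to `(B, B ∩ F)`:
a homeomorphism of the subspaces `A → B` carrying `A ∩ F` onto `B ∩ F`. -/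
def PairHomeo (F A B : Set E) : Prop :=
  ∃ h : A ≃ₜ B, ∀ x : A, ((h x : E) ∈ F ↔ (x : E) ∈ F)

/-- `(E, F)` is self-similar: every partition of `E` into finitely many pairwise
disjoint nonempty clopen sets has a piece containing a clopen set `D` with
`(D, D ∩ F)` homeomorphic (as a pair) to `(E, F)`. -/
def SelfSimilarPair (F : Set E) : Prop :=
  ∀ (n : ℕ) (P : Fin n → Set E),
    (∀ i, IsClopen (P i)) → (∀ i, (P i).Nonempty) →
    Pairwise (Function.onFun Disjoint P) → (⋃ i, P i) = Set.univ →
    ∃ i, ∃ D : Set E, IsClopen D ∧ D ⊆ P i ∧ PairHomeo F D Set.univ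

/-- The preorder `x ≼ y` on ends: every clopen neighborhood `U` of `y` contains a
clopen set `D` for which there are a clopen neighborhood `V` of `x` and a
homeomorphism of pairs `(V, V ∩ F) → (D, D ∩ F)`. -/
def EndsLE (F : Set E) (x y : E) : Prop :=
  ∀ U : Set E, IsClopen U → y ∈ U →
    ∃ D : Set E, D ⊆ U ∧ IsClopen D ∧
      ∃ V : Set E, IsClopen V ∧ x ∈ V ∧ PairHomeo F V D

/-- The equivalence `x ∼ y`: `x ≼ y` and `y ≼ x`. -/
def EndsEquiv (F : Set E) (x y : E) : Prop := EndsLE F x y ∧ EndsLE F y x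

/-- `x` is a maximal end. -/
def MaximalEnd (F : Set E) (x : E) : Prop := ∀ y, EndsLE F x y → EndsLE F y x

/-- `M(E)`, the set of maximal ends. -/
def MaxSet (F : Set E) : Set E := {x | MaximalEnd F x}

/-- `(E, F)` is uniformly self-similar: it is self-similar, `M(E)` is a single
`∼`-equivalence class, and `M(E)` is homeomorphic to the Cantor space `ℕ → Bool`. -/
def UniformlySelfSimilar (F : Set E) : Prop :=
  SelfSimilarPair F ∧
  (∃ x, MaxSet F = {y | EndsEquiv F x y}) ∧
  Nonempty (↥(MaxSet F) ≃ₜ (ℕ → Bool))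

/-- The group `Homeo(E,F)` of homeomorphisms of `E` preserving `F`,
as a subgroup of the permutation group of `E`. -/
def EndsHomeo (F : Set E) : Subgroup (Equiv.Perm E) where
  carrier := {h | Continuous h ∧ Continuous h.symm ∧ ∀ x, h x ∈ F ↔ x ∈ F}
  one_mem' := ⟨continuous_id, continuous_id, fun _ => Iff.rfl⟩
  mul_mem' := by
    rintro a b ⟨ha1, ha2, ha3⟩ ⟨hb1, hb2, hb3⟩
    refine ⟨?_, ?_, fun x => ?_⟩
    · exact ha1.comp hb1
    · exact hb2.comp ha2
    · exact (ha3 (b x)).trans (hb3 x)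
  inv_mem' := by
    rintro a ⟨ha1, ha2, ha3⟩
    refine ⟨ha2, ha1, fun x => ?_⟩
    have h := ha3 (a⁻¹ x)
    rw [show a (a⁻¹ x) = x from (Equiv.eq_symm_apply a).mp rfl] at h
    exact h.symm

/-- A half-space of `(E,F)`: a clopen set meeting `M(E)` in a nonempty proper subset. -/
def IsHalfSpace (F H : Set E) : Prop :=
  IsClopen H ∧ (H ∩ MaxSet F).Nonempty ∧ H ∩ MaxSet F ⊂ MaxSet F

/-- `φ` is an `H`-translation: the sets `φⁿ(H)`, `n ∈ ℤ`, are pairwise disjoint. -/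
def IsHTranslation (H : Set E) (φ : Equiv.Perm E) : Prop :=
  ∀ m n : ℤ, m ≠ n → Disjoint ((φ ^ m) '' H) ((φ ^ n) '' H)

/-- A homeomorphism is supported on `H` if it fixes every point outside `H`. -/
def SupportedOn (H : Set E) (h : Equiv.Perm E) : Prop := ∀ x ∉ H, h x = x

end EndsSpace

variable {E : Type*} [TopologicalSpace E] [Nonempty E] [CompactSpace E]
  [TopologicalSpace.MetrizableSpace E] [TotallyDisconnectedSpace E]

section Aux
open Set

/-- A concrete witness for a pair-homeomorphism between `A` and `B`. -/
structure GoodMap (F A B : Set E) (f : E → E) : Prop where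
  cont : ContinuousOn f A
  inj : Set.InjOn f A
  image : f '' A = B
  mem : ∀ z ∈ A, (f z ∈ F ↔ z ∈ F)

variable {F A B C S S₁ S₂ D U V : Set E} {f g : E → E} {x y : E}

theorem pairHomeo_symm (h : PairHomeo F A B) : PairHomeo F B A := by
  obtain ⟨h, hp⟩ := h
  refine ⟨h.symm, fun b => ?_⟩
  have h2 := hp (h.symm b)
  rw [Homeomorph.apply_symm_apply] at h2
  exact h2.symm

theorem goodMap_mapsTo (h : GoodMap F A B f) : Set.MapsTo f A B := fun z hz =>
  h.image ▸ Set.mem_image_of_mem f hz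

theorem goodMap_id : GoodMap F A A id :=
  ⟨continuousOn_id, Set.injOn_id A, Set.image_id A, fun _ _ => Iff.rfl⟩

theorem goodMap_comp (h1 : GoodMap F A B f) (h2 : GoodMap F B C g) :
    GoodMap F A C (g ∘ f) := by
  refine ⟨h2.cont.comp h1.cont (goodMap_mapsTo h1), h2.inj.comp h1.inj (goodMap_mapsTo h1), ?_, ?_⟩
  · rw [Set.image_comp, h1.image, h2.image]
  · intro z hz
    exact (h2.mem (f z) (goodMap_mapsTo h1 hz)).trans (h1.mem z hz)

theorem goodMap_restrict (h : GoodMap F A B f) (hS : S ⊆ A) : GoodMap F S (f '' S) f :=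
  ⟨h.cont.mono hS, h.inj.mono hS, rfl, fun z hz => h.mem z (hS hz)⟩

theorem goodMap_of_pairHomeo (h : PairHomeo F A B) : ∃ f, GoodMap F A B f := by
  classical
  obtain ⟨φ, hφ⟩ := h
  refine ⟨fun z => if hz : z ∈ A then (φ ⟨z, hz⟩ : E) else z, ?_, ?_, ?_, ?_⟩
  · rw [continuousOn_iff_continuous_restrict]
    have : (A.domRestrict fun z => if hz : z ∈ A then (φ ⟨z, hz⟩ : E) else z) =
        fun z : A => (φ z : E) := by
      funext z
      simp only [Set.domRestrict_apply, dif_pos z.2, Subtype.eta]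
    rw [this]
    exact continuous_subtype_val.comp φ.continuous
  · intro z₁ h₁ z₂ h₂ he
    simp only [dif_pos h₁, dif_pos h₂] at he
    have := φ.injective (Subtype.coe_injective he)
    exact congrArg Subtype.val this
  · ext w
    constructor
    · rintro ⟨z, hz, rfl⟩
      simp only [dif_pos hz]
      exact (φ ⟨z, hz⟩).2
    · intro hw
      refine ⟨(φ.symm ⟨w, hw⟩ : E), (φ.symm ⟨w, hw⟩).2, ?_⟩
      simp only [dif_pos (φ.symm ⟨w, hw⟩).2, Subtype.eta, Homeomorph.apply_symm_apply]
  · intro z hz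
    simp only [dif_pos hz]
    exact hφ ⟨z, hz⟩

theorem homeo_of_goodMap (hA : IsClosed A) (h : GoodMap F A B f) :
    ∃ φ : A ≃ₜ B, (∀ z : A, (φ z : E) = f z) ∧ ∀ z : A, ((φ z : E) ∈ F ↔ (z : E) ∈ F) := by
  have hbij : Set.BijOn f A B :=
    ⟨goodMap_mapsTo h, h.inj, fun b hb => h.image ▸ hb⟩
  let e : A ≃ B := Set.BijOn.equiv f hbij
  have hecoe : ∀ z : A, (e z : E) = f z := fun z => rfl
  have hcont : Continuous e := by
    refine Continuous.subtype_mk ?_ _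
    exact h.cont.restrict
  haveI : CompactSpace A := isCompact_iff_compactSpace.mp hA.isCompact
  let φ : A ≃ₜ B := hcont.homeoOfEquivCompactToT2
  refine ⟨φ, fun z => rfl, fun z => ?_⟩
  show (f (z : E) ∈ F ↔ (z : E) ∈ F)
  exact h.mem z z.2

theorem pairHomeo_of_goodMap (hA : IsClosed A) (h : GoodMap F A B f) : PairHomeo F A B := by
  obtain ⟨φ, _, h2⟩ := homeo_of_goodMap hA h
  exact ⟨φ, h2⟩

theorem goodMap_symm (hA : IsClosed A) (h : GoodMap F A B f) : ∃ g, GoodMap F B A g := by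
  obtain ⟨φ, _, h2⟩ := homeo_of_goodMap hA h
  exact goodMap_of_pairHomeo (pairHomeo_symm ⟨φ, h2⟩)

theorem goodMap_image_isClopen (hA : IsClopen A) (hB : IsClopen B) (h : GoodMap F A B f)
    (hS : IsClopen S) (hSA : S ⊆ A) : IsClopen (f '' S) := by
  have himgS : IsClosed (f '' S) :=
    (hS.isClosed.isCompact.image_of_continuousOn (h.cont.mono hSA)).isClosed
  have himgAS : IsClosed (f '' (A \ S)) :=
    ((hA.isClosed.isCompact.diff hS.isOpen).image_of_continuousOn
      (h.cont.mono Set.diff_subset)).isClosed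
  have hunion : f '' S ∪ f '' (A \ S) = B := by
    rw [← Set.image_union, Set.union_diff_cancel hSA, h.image]
  have hdisj : Disjoint (f '' S) (f '' (A \ S)) := by
    rw [Set.disjoint_left]
    rintro w ⟨z₁, hz₁, rfl⟩ ⟨z₂, hz₂, he⟩
    have := h.inj (hSA hz₁) hz₂.1 he.symm
    exact hz₂.2 (this ▸ hz₁)
  have : f '' S = B \ f '' (A \ S) := by
    rw [← hunion]
    rw [Set.union_diff_right]
    exact (hdisj.sdiff_eq_left).symm
  refine ⟨himgS, ?_⟩
  rw [this]
  exact hB.isOpen.sdiff himgAS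

theorem goodMap_union {A₁ A₂ B₁ B₂ : Set E} {f₁ f₂ : E → E}
    (h1 : GoodMap F A₁ B₁ f₁) (h2 : GoodMap F A₂ B₂ f₂)
    (hA1 : IsOpen A₁) (hA2 : IsOpen A₂) (hA : Disjoint A₁ A₂) (hB : Disjoint B₁ B₂) :
    ∃ f, GoodMap F (A₁ ∪ A₂) (B₁ ∪ B₂) f := by
  classical
  set f : E → E := fun z => if z ∈ A₁ then f₁ z else f₂ z with hfdef
  have hfa1 : ∀ z ∈ A₁, f z = f₁ z := fun z hz => if_pos hz
  have hfa2 : ∀ z ∈ A₂, f z = f₂ z := fun z hz => if_neg (Set.disjoint_right.mp hA hz)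
  have hmap1 : ∀ z ∈ A₁, f z ∈ B₁ := fun z hz => hfa1 z hz ▸ goodMap_mapsTo h1 hz
  have hmap2 : ∀ z ∈ A₂, f z ∈ B₂ := fun z hz => hfa2 z hz ▸ goodMap_mapsTo h2 hz
  refine ⟨f, ?_, ?_, ?_, ?_⟩
  · intro z hz
    rcases hz with hz | hz
    · exact (((h1.cont z hz).congr hfa1 (hfa1 z hz)).mono_of_mem_nhdsWithin
        (mem_nhdsWithin_of_mem_nhds (hA1.mem_nhds hz)))
    · exact (((h2.cont z hz).congr hfa2 (hfa2 z hz)).mono_of_mem_nhdsWithin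
        (mem_nhdsWithin_of_mem_nhds (hA2.mem_nhds hz)))
  · rintro z₁ (h₁ | h₁) z₂ (h₂ | h₂) he
    · exact h1.inj h₁ h₂ (by rwa [hfa1 z₁ h₁, hfa1 z₂ h₂] at he)
    · exfalso
      rw [hfa1 z₁ h₁, hfa2 z₂ h₂] at he
      exact Set.disjoint_left.mp hB (goodMap_mapsTo h1 h₁) (he ▸ goodMap_mapsTo h2 h₂)
    · exfalso
      rw [hfa2 z₁ h₁, hfa1 z₂ h₂] at he
      exact Set.disjoint_left.mp hB (goodMap_mapsTo h1 h₂) (he ▸ goodMap_mapsTo h2 h₁)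
    · exact h2.inj h₁ h₂ (by rwa [hfa2 z₁ h₁, hfa2 z₂ h₂] at he)
  · rw [Set.image_union]
    have e1 : f '' A₁ = B₁ := by
      rw [← h1.image]; exact Set.image_congr hfa1
    have e2 : f '' A₂ = B₂ := by
      rw [← h2.image]; exact Set.image_congr hfa2
    rw [e1, e2]
  · rintro z (hz | hz)
    · rw [hfa1 z hz]; exact h1.mem z hz
    · rw [hfa2 z hz]; exact h2.mem z hz

/-- `U` contains a clopen pair-copy of the whole space. -/
def HasCopy (F U : Set E) : Prop :=
  ∃ D g, IsClopen D ∧ D ⊆ U ∧ GoodMap F Set.univ D g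

theorem exists_strong_point (hss : SelfSimilarPair F) :
    ∃ z : E, ∀ W : Set E, IsClopen W → z ∈ W → HasCopy F W := by
  classical
  by_contra hcon
  push_neg at hcon
  choose W hWc hWz hWn using hcon
  obtain ⟨t, ht⟩ := isCompact_univ.elim_finite_subcover W (fun z => (hWc z).isOpen)
    (fun z _ => Set.mem_iUnion.mpr ⟨z, hWz z⟩)
  set m := t.card with hm
  set e : Fin m → E := fun i => (t.equivFin.symm i : E) with he
  set W' : Fin m → Set E := fun i => W (e i) with hW'
  set Q : Fin m → Set E := fun i => W' i \ ⋃ j ∈ {j : Fin m | j < i}, W' j with hQ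
  have hQc : ∀ i, IsClopen (Q i) := fun i => (hWc _).diff
    (Set.Finite.isClopen_biUnion (Set.toFinite _) (fun j _ => hWc _))
  have hQsub : ∀ i, Q i ⊆ W' i := fun i => Set.diff_subset
  have hQdis : ∀ i j : Fin m, i ≠ j → Disjoint (Q i) (Q j) := by
    have key : ∀ i j : Fin m, i < j → Disjoint (Q i) (Q j) := by
      intro i j hij
      rw [Set.disjoint_left]
      intro z hzi hzj
      exact hzj.2 (Set.mem_biUnion hij (hQsub i hzi))
    intro i j hij
    rcases lt_or_gt_of_ne hij with h | h
    · exact key i j h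
    · exact (key j i h).symm
  have hQcover : ∀ z : E, ∃ i, z ∈ Q i := by
    intro z
    have hz : ∃ i, z ∈ W' i := by
      have h2 := ht (Set.mem_univ z)
      rw [Set.mem_iUnion₂] at h2
      obtain ⟨w, hwt, hzw⟩ := h2
      refine ⟨t.equivFin ⟨w, hwt⟩, ?_⟩
      show z ∈ W (e (t.equivFin ⟨w, hwt⟩))
      simp only [he, Equiv.symm_apply_apply]
      exact hzw
    obtain ⟨i, hi⟩ := hz
    set s : Finset (Fin m) := Finset.univ.filter (fun i => z ∈ W' i) with hs
    have hsne : s.Nonempty := ⟨i, by simp [hs, hi]⟩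
    refine ⟨s.min' hsne, ?_, ?_⟩
    · have h3 : s.min' hsne ∈ s := s.min'_mem hsne
      simp only [hs, Finset.mem_filter] at h3
      exact h3.2
    · intro hmem
      rw [Set.mem_iUnion₂] at hmem
      obtain ⟨j, hj, hzj⟩ := hmem
      have hjs : j ∈ s := by simp [hs, hzj]
      exact absurd (s.min'_le j hjs) (not_le.mpr hj)
  haveI : Fintype {i : Fin m // (Q i).Nonempty} := Subtype.fintype _
  set n := Fintype.card {i : Fin m // (Q i).Nonempty} with hn
  set ee : Fin n ≃ {i : Fin m // (Q i).Nonempty} := (Fintype.equivFin _).symm with hee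
  obtain ⟨k, D, hDc, hDsub, hDp⟩ := hss n (fun k => Q (ee k))
    (fun k => hQc _) (fun k => (ee k).2)
    (fun k k' hkk' => hQdis _ _ (fun hv => hkk' (ee.injective (Subtype.ext hv))))
    (by
      apply Set.eq_univ_of_forall
      intro z
      obtain ⟨i, hzi⟩ := hQcover z
      refine Set.mem_iUnion.mpr ⟨ee.symm ⟨i, ⟨z, hzi⟩⟩, ?_⟩
      simpa using hzi)
  obtain ⟨g, hg⟩ := goodMap_of_pairHomeo (pairHomeo_symm hDp)
  exact hWn (e (ee k).1) ⟨D, g, hDc, (hDsub.trans (hQsub _)), hg⟩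

theorem hasCopy_of_maximal (hss : SelfSimilarPair F) (hx : MaximalEnd F x)
    (hU : IsClopen U) (hxU : x ∈ U) : HasCopy F U := by
  obtain ⟨z, hz⟩ := exists_strong_point hss
  have hxz : EndsLE F x z := by
    intro W hW hzW
    obtain ⟨D, g, hDc, hDW, hg⟩ := hz W hW hzW
    exact ⟨D, hDW, hDc, Set.univ, isClopen_univ, Set.mem_univ x,
      pairHomeo_of_goodMap isClosed_univ hg⟩
  obtain ⟨D₂, hD₂U, hD₂c, V₂, hV₂c, hzV₂, hph⟩ := hx z hxz U hU hxU
  obtain ⟨f, hf⟩ := goodMap_of_pairHomeo hph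
  obtain ⟨D₃, g₃, hD₃c, hD₃V₂, hg₃⟩ := hz V₂ hV₂c hzV₂
  refine ⟨f '' D₃, f ∘ g₃, goodMap_image_isClopen hV₂c hD₂c hf hD₃c hD₃V₂,
    ?_, goodMap_comp hg₃ (goodMap_restrict hf hD₃V₂)⟩
  calc f '' D₃ ⊆ f '' V₂ := Set.image_mono hD₃V₂
    _ = D₂ := hf.image
    _ ⊆ U := hD₂U

theorem iter_goodMap (hg : GoodMap F Set.univ D g) (hD : IsClopen D) (hS : IsClopen S) :
    ∀ a : ℕ, GoodMap F S (g^[a] '' S) (g^[a]) ∧ IsClopen (g^[a] '' S) ∧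
      (0 < a → g^[a] '' S ⊆ D) := by
  intro a
  induction a with
  | zero =>
      simp only [Function.iterate_zero, Set.image_id]
      exact ⟨goodMap_id, hS, fun h => absurd h (lt_irrefl 0)⟩
  | succ a ih =>
      obtain ⟨hgm, hclop, hsub⟩ := ih
      have him : g^[a + 1] '' S = g '' (g^[a] '' S) := by
        rw [Function.iterate_succ', Set.image_comp]
      have hrest : GoodMap F (g^[a] '' S) (g '' (g^[a] '' S)) g :=
        goodMap_restrict hg (Set.subset_univ _)
      refine ⟨?_, ?_, ?_⟩
      · rw [him, Function.iterate_succ']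
        exact goodMap_comp hgm hrest
      · rw [him]
        exact goodMap_image_isClopen isClopen_univ hD hg hclop (Set.subset_univ _)
      · intro _
        rw [him]
        calc g '' (g^[a] '' S) ⊆ g '' Set.univ := Set.image_mono (Set.subset_univ _)
          _ = D := hg.image

theorem iter_disjoint (hg : GoodMap F Set.univ D g) {S S' : Set E}
    (hS : Disjoint S D) (hS' : Disjoint S' D) :
    ∀ a b : ℕ, a < b → Disjoint (g^[a] '' S) (g^[b] '' S') := by
  have hsubD : ∀ (X : Set E) (b : ℕ), 0 < b → g^[b] '' X ⊆ D := by
    intro X b hb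
    obtain ⟨b', rfl⟩ := Nat.exists_eq_succ_of_ne_zero hb.ne'
    rw [Function.iterate_succ', Set.image_comp]
    calc g '' (g^[b'] '' X) ⊆ g '' Set.univ := Set.image_mono (Set.subset_univ _)
      _ = D := hg.image
  intro a
  induction a with
  | zero =>
      intro b hb
      simp only [Function.iterate_zero, Set.image_id]
      exact hS.mono_right (hsubD S' b hb)
  | succ a ih =>
      intro b hb
      obtain ⟨b', rfl⟩ := Nat.exists_eq_succ_of_ne_zero (by omega : b ≠ 0)
      have hd := ih b' (Nat.succ_lt_succ_iff.mp hb)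
      rw [Function.iterate_succ' g a, Function.iterate_succ' g b',
        Set.image_comp, Set.image_comp]
      exact hd.image hg.inj (Set.subset_univ _) (Set.subset_univ _)

theorem pick3 {T : ℕ → Set E} (hd : ∀ a b, a < b → Disjoint (T a) (T b)) (p q : E) (lo : ℕ) :
    ∃ a, lo < a ∧ p ∉ T a ∧ q ∉ T a := by
  have excl : ∀ {r : E} {a b : ℕ}, a ≠ b → r ∈ T a → r ∉ T b := by
    intro r a b hab hr
    rcases lt_or_gt_of_ne hab with h | h
    · exact Set.disjoint_left.mp (hd a b h) hr
    · exact Set.disjoint_right.mp (hd b a h) hr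
  by_cases hp : p ∈ T (lo + 1)
  · by_cases hq : q ∈ T (lo + 2)
    · exact ⟨lo + 3, by omega, excl (by omega) hp, excl (by omega) hq⟩
    · exact ⟨lo + 2, by omega, excl (by omega) hp, hq⟩
  · by_cases hq : q ∈ T (lo + 1)
    · by_cases hp2 : p ∈ T (lo + 2)
      · exact ⟨lo + 3, by omega, excl (by omega) hp2, excl (by omega) hq⟩
      · exact ⟨lo + 2, by omega, hp2, excl (by omega) hq⟩
    · exact ⟨lo + 1, by omega, hp, hq⟩

theorem twocopies (hg : GoodMap F Set.univ D g) (hD : IsClopen D)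
    (hS₁ : IsClopen S₁) (hS₂ : IsClopen S₂) (hd₁ : Disjoint S₁ D) (hd₂ : Disjoint S₂ D)
    (p q : E) :
    ∃ T₁ T₂ : Set E, IsClopen T₁ ∧ IsClopen T₂ ∧ T₁ ⊆ D ∧ T₂ ⊆ D ∧ Disjoint T₁ T₂ ∧
      p ∉ T₁ ∧ q ∉ T₁ ∧ p ∉ T₂ ∧ q ∉ T₂ ∧
      (∃ f, GoodMap F S₁ T₁ f) ∧ (∃ f, GoodMap F S₂ T₂ f) := by
  have hiter1 := iter_goodMap hg hD hS₁
  have hiter2 := iter_goodMap hg hD hS₂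
  obtain ⟨a, ha0, hpa, hqa⟩ := pick3 (T := fun a => g^[a] '' S₁)
    (fun a b hab => iter_disjoint hg hd₁ hd₁ a b hab) p q 0
  obtain ⟨b, hba, hpb, hqb⟩ := pick3 (T := fun b => g^[b] '' S₂)
    (fun a b hab => iter_disjoint hg hd₂ hd₂ a b hab) p q a
  exact ⟨g^[a] '' S₁, g^[b] '' S₂, (hiter1 a).2.1, (hiter2 b).2.1,
    (hiter1 a).2.2 ha0, (hiter2 b).2.2 (by omega), iter_disjoint hg hd₁ hd₂ a b hba,
    hpa, hqa, hpb, hqb, ⟨_, (hiter1 a).1⟩, ⟨_, (hiter2 b).1⟩⟩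

theorem assemble {N M TA TB : Set E}
    (hA : IsClopen A) (hB : IsClopen B) (hN : IsClopen N) (hM : IsClopen M)
    (hNA : N ⊆ A) (hMB : M ⊆ B) (hTA : IsClopen TA) (hTB : IsClopen TB)
    (hTAN : TA ⊆ N) (hTBM : TB ⊆ M)
    (h1 : ∃ f, GoodMap F (B \ M) TA f) (h2 : ∃ f, GoodMap F (A \ N) TB f) :
    ∃ f, GoodMap F (A \ (N \ TA)) (B \ (M \ TB)) f := by
  have key : ∀ (X Y T : Set E), T ⊆ Y → Y ⊆ X → X \ (Y \ T) = (X \ Y) ∪ T := by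
    intro X Y T hTY hYX
    ext z
    simp only [Set.mem_diff, Set.mem_union]
    constructor
    · rintro ⟨hzX, hz⟩
      by_cases hzY : z ∈ Y
      · right; by_contra hzT; exact hz ⟨hzY, hzT⟩
      · left; exact ⟨hzX, hzY⟩
    · rintro (⟨hzX, hzY⟩ | hzT)
      · exact ⟨hzX, fun hc => hzY hc.1⟩
      · exact ⟨hYX (hTY hzT), fun hc => hc.2 hzT⟩
  obtain ⟨fa, hfa⟩ := h1
  obtain ⟨fb, hfb⟩ := h2
  obtain ⟨fa', hfa'⟩ := goodMap_symm (hB.diff hM).isClosed hfa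
  rw [key A N TA hTAN hNA, key B M TB hTBM hMB]
  obtain ⟨f, hf⟩ := goodMap_union hfb hfa' (hA.diff hN).isOpen hTA.isOpen
    (Set.disjoint_left.mpr fun {z} hz hzT => hz.2 (hTAN hzT))
    (Set.disjoint_left.mpr fun {z} hz hzB => hzB.2 (hTBM hz))
  refine ⟨f, ?_⟩
  rwa [Set.union_comm TB (B \ M)] at hf

theorem step_lemma (hss : SelfSimilarPair F) (hx : MaximalEnd F x) (hy : MaximalEnd F y)
    (hcase : x = y ∨ Disjoint U V) (hU : IsClopen U) (hV : IsClopen V)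
    (hA : IsClopen A) (hB : IsClopen B) (hxA : x ∈ A) (hyB : y ∈ B)
    (hAU : A ⊆ U) (hBV : B ⊆ V) {NN MM : Set E}
    (hNN : IsClopen NN) (hMM : IsClopen MM) (hxN : x ∈ NN) (hyM : y ∈ MM) :
    ∃ A' B' : Set E, IsClopen A' ∧ IsClopen B' ∧ x ∈ A' ∧ y ∈ B' ∧
      A' ⊆ A ∩ NN ∧ B' ⊆ B ∩ MM ∧ ∃ f, GoodMap F (A \ A') (B \ B') f := by
  rcases hcase with rfl | hdUV
  · -- the two points coincide
    set N := A ∩ B ∩ NN ∩ MM with hNdef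
    have hNc : IsClopen N := ((hA.inter hB).inter hNN).inter hMM
    have hxN' : x ∈ N := ⟨⟨⟨hxA, hyB⟩, hxN⟩, hyM⟩
    have hNsubA : N ⊆ A := fun z hz => hz.1.1.1
    have hNsubB : N ⊆ B := fun z hz => hz.1.1.2
    obtain ⟨D, g, hDc, hDN, hg⟩ := hasCopy_of_maximal hss hx hNc hxN'
    have hd₁ : Disjoint (B \ N) D := Set.disjoint_left.mpr fun {z} hz hzD => hz.2 (hDN hzD)
    have hd₂ : Disjoint (A \ N) D := Set.disjoint_left.mpr fun {z} hz hzD => hz.2 (hDN hzD)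
    obtain ⟨T₁, T₂, hT₁c, hT₂c, hT₁D, hT₂D, hTdis, hpT₁, _, hpT₂, _, hcop₁, hcop₂⟩ :=
      twocopies hg hDc (hB.diff hNc) (hA.diff hNc) hd₁ hd₂ x x
    refine ⟨N \ T₁, N \ T₂, hNc.diff hT₁c, hNc.diff hT₂c, ⟨hxN', hpT₁⟩, ⟨hxN', hpT₂⟩,
      fun z hz => ⟨hz.1.1.1.1, hz.1.1.2⟩, fun z hz => ⟨hz.1.1.1.2, hz.1.2⟩, ?_⟩
    exact assemble hA hB hNc hNc hNsubA hNsubB hT₁c hT₂c (hT₁D.trans hDN)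
      (hT₂D.trans hDN) hcop₁ hcop₂
  · -- disjoint neighborhoods
    set N := A ∩ NN with hNdef
    set M := B ∩ MM with hMdef
    have hNc : IsClopen N := hA.inter hNN
    have hMc : IsClopen M := hB.inter hMM
    have hxN' : x ∈ N := ⟨hxA, hxN⟩
    have hyM' : y ∈ M := ⟨hyB, hyM⟩
    obtain ⟨DA, gA, hDAc, hDAN, hgA⟩ := hasCopy_of_maximal hss hx hNc hxN'
    obtain ⟨DB, gB, hDBc, hDBM, hgB⟩ := hasCopy_of_maximal hss hy hMc hyM'
    have hd₁ : Disjoint (B \ M) DA := Set.disjoint_left.mpr fun {z} hz hzD =>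
      Set.disjoint_left.mp hdUV (hAU ((hDAN hzD).1)) (hBV hz.1)
    have hd₂ : Disjoint (A \ N) DB := Set.disjoint_left.mpr fun {z} hz hzD =>
      Set.disjoint_left.mp hdUV (hAU hz.1) (hBV ((hDBM hzD).1))
    obtain ⟨T₁, _, hT₁c, _, hT₁D, _, _, hpT₁, _, _, _, hcop₁, _⟩ :=
      twocopies hgA hDAc (hB.diff hMc) isClopen_empty hd₁ (Set.empty_disjoint DA) x x
    obtain ⟨T₂, _, hT₂c, _, hT₂D, _, _, hpT₂, _, _, _, hcop₂, _⟩ :=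
      twocopies hgB hDBc (hA.diff hNc) isClopen_empty hd₂ (Set.empty_disjoint DB) y y
    refine ⟨N \ T₁, M \ T₂, hNc.diff hT₁c, hMc.diff hT₂c, ⟨hxN', hpT₁⟩, ⟨hyM', hpT₂⟩,
      fun z hz => hz.1, fun z hz => hz.1, ?_⟩
    exact assemble hA hB hNc hMc (fun z hz => hz.1) (fun z hz => hz.1) hT₁c hT₂c
      (hT₁D.trans hDAN) (hT₂D.trans hDBM) hcop₁ hcop₂

theorem glue_lemma {A B : ℕ → Set E}
    (hA : ∀ n, IsClopen (A n)) (hB : ∀ n, IsClopen (B n))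
    (hAm : ∀ n, A (n + 1) ⊆ A n) (hBm : ∀ n, B (n + 1) ⊆ B n)
    (hiA : ⋂ n, A n = {x}) (hiB : ⋂ n, B n = {y})
    (hxy : x ∈ F ↔ y ∈ F)
    (hf : ∀ n, ∃ f, GoodMap F (A n \ A (n + 1)) (B n \ B (n + 1)) f) :
    ∃ f, GoodMap F (A 0) (B 0) f ∧ f x = y := by
  classical
  choose fn hfn using hf
  have hAanti : Antitone A := antitone_nat_of_succ_le hAm
  have hBanti : Antitone B := antitone_nat_of_succ_le hBm
  have hxA : ∀ n, x ∈ A n := by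
    intro n
    have h1 : x ∈ ⋂ n, A n := by rw [hiA]; rfl
    exact Set.mem_iInter.mp h1 n
  have hyB : ∀ n, y ∈ B n := by
    intro n
    have h1 : y ∈ ⋂ n, B n := by rw [hiB]; rfl
    exact Set.mem_iInter.mp h1 n
  have ring_unique : ∀ {z : E} {n m : ℕ}, z ∈ A n \ A (n + 1) → z ∈ A m \ A (m + 1) →
      n = m := by
    intro z n m hn hm
    by_contra hne
    rcases lt_or_gt_of_ne hne with h | h
    · exact hn.2 (hAanti (by omega : n + 1 ≤ m) hm.1)
    · exact hm.2 (hAanti (by omega : m + 1 ≤ n) hn.1)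
  set f : E → E := fun z =>
    if hz : ∃ n, z ∈ A n \ A (n + 1) then fn (Nat.find hz) z else y with hfdef
  have f_ring : ∀ {z n}, z ∈ A n \ A (n + 1) → f z = fn n z := by
    intro z n hzn
    have hz : ∃ n, z ∈ A n \ A (n + 1) := ⟨n, hzn⟩
    have h1 : Nat.find hz = n := ring_unique (Nat.find_spec hz) hzn
    simp only [hfdef, dif_pos hz, h1]
  have f_x : f x = y := by
    have h1 : ¬ ∃ n, x ∈ A n \ A (n + 1) := by
      rintro ⟨n, hn⟩; exact hn.2 (hxA (n + 1))
    simp only [hfdef, dif_neg h1]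
  have exists_ring : ∀ {z}, z ∈ A 0 → z ≠ x → ∃ n, z ∈ A n \ A (n + 1) := by
    intro z hz0 hzx
    have hno : ∃ m, z ∉ A m := by
      by_contra hc
      push_neg at hc
      have h1 : z ∈ ⋂ n, A n := Set.mem_iInter.mpr hc
      rw [hiA] at h1
      exact hzx h1
    have h0 : Nat.find hno ≠ 0 := fun h => (h ▸ Nat.find_spec hno) hz0
    obtain ⟨n, hn⟩ := Nat.exists_eq_succ_of_ne_zero h0
    refine ⟨n, not_not.mp (Nat.find_min hno (by omega)), ?_⟩
    have hsp := Nat.find_spec hno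
    rw [hn] at hsp
    exact hsp
  have exists_ringB : ∀ {w}, w ∈ B 0 → w ≠ y → ∃ n, w ∈ B n \ B (n + 1) := by
    intro w hw0 hwy
    have hno : ∃ m, w ∉ B m := by
      by_contra hc
      push_neg at hc
      have h1 : w ∈ ⋂ n, B n := Set.mem_iInter.mpr hc
      rw [hiB] at h1
      exact hwy h1
    have h0 : Nat.find hno ≠ 0 := fun h => (h ▸ Nat.find_spec hno) hw0
    obtain ⟨n, hn⟩ := Nat.exists_eq_succ_of_ne_zero h0
    refine ⟨n, not_not.mp (Nat.find_min hno (by omega)), ?_⟩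
    have hsp := Nat.find_spec hno
    rw [hn] at hsp
    exact hsp
  have ring_val : ∀ {z n}, z ∈ A n \ A (n + 1) → fn n z ∈ B n \ B (n + 1) := by
    intro z n hn
    rw [← (hfn n).image]
    exact Set.mem_image_of_mem _ hn
  have himg : f '' A 0 = B 0 := by
    apply Set.Subset.antisymm
    · rintro w ⟨z, hz0, rfl⟩
      by_cases hzx : z = x
      · subst hzx; rw [f_x]; exact hyB 0
      · obtain ⟨n, hn⟩ := exists_ring hz0 hzx
        rw [f_ring hn]
        exact hBanti (Nat.zero_le n) (ring_val hn).1
    · intro w hw0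
      by_cases hwy : w = y
      · exact ⟨x, hxA 0, by rw [f_x, hwy]⟩
      · obtain ⟨m, hm⟩ := exists_ringB hw0 hwy
        have h1 : w ∈ fn m '' (A m \ A (m + 1)) := by rw [(hfn m).image]; exact hm
        obtain ⟨z, hz, rfl⟩ := h1
        exact ⟨z, hAanti (Nat.zero_le m) hz.1, f_ring hz⟩
  have hinj : Set.InjOn f (A 0) := by
    intro z₁ h₁ z₂ h₂ he
    by_cases h₁x : z₁ = x <;> by_cases h₂x : z₂ = x
    · rw [h₁x, h₂x]
    · exfalso
      subst h₁x
      obtain ⟨n, hn⟩ := exists_ring h₂ h₂x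
      rw [f_x, f_ring hn] at he
      exact (ring_val hn).2 (he ▸ hyB (n + 1))
    · exfalso
      subst h₂x
      obtain ⟨n, hn⟩ := exists_ring h₁ h₁x
      rw [f_ring hn, f_x] at he
      exact (ring_val hn).2 (by rw [he]; exact hyB (n + 1))
    · obtain ⟨n, hn⟩ := exists_ring h₁ h₁x
      obtain ⟨m, hm⟩ := exists_ring h₂ h₂x
      rw [f_ring hn, f_ring hm] at he
      have hnm : n = m := by
        by_contra hne
        rcases lt_or_gt_of_ne hne with h | h
        · exact (ring_val hn).2 (by rw [he]; exact hBanti (by omega : n + 1 ≤ m) (ring_val hm).1)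
        · exact (ring_val hm).2 (by rw [← he]; exact hBanti (by omega : m + 1 ≤ n) (ring_val hn).1)
      subst hnm
      exact (hfn n).inj hn hm he
  have hmemF : ∀ z ∈ A 0, (f z ∈ F ↔ z ∈ F) := by
    intro z hz0
    by_cases hzx : z = x
    · subst hzx; rw [f_x]; exact hxy.symm
    · obtain ⟨n, hn⟩ := exists_ring hz0 hzx
      rw [f_ring hn]; exact (hfn n).mem z hn
  have hcont : ContinuousOn f (A 0) := by
    intro z hz0
    by_cases hzx : z = x
    · rw [hzx]
      have key : Filter.Tendsto f (nhdsWithin x (A 0)) (nhds y) := by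
        rw [Filter.tendsto_def]
        intro s hs
        obtain ⟨O, hOs, hOopen, hyO⟩ := mem_nhds_iff.mp hs
        have hdir : Directed (· ⊇ ·) B := fun m n =>
          ⟨max m n, hBanti (le_max_left m n), hBanti (le_max_right m n)⟩
        obtain ⟨m, hm⟩ := exists_subset_nhds_of_isCompact' hdir
          (fun n => (hB n).isClosed.isCompact) (fun n => (hB n).isClosed)
          (fun w hw => by
            rw [hiB, Set.mem_singleton_iff] at hw
            rw [hw]
            exact hOopen.mem_nhds hyO)
        have hAm' : A m ∈ nhdsWithin x (A 0) :=
          mem_nhdsWithin_of_mem_nhds ((hA m).isOpen.mem_nhds (hxA m))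
        refine Filter.mem_of_superset hAm' ?_
        intro w hwAm
        show f w ∈ s
        apply hOs
        by_cases hwx : w = x
        · rw [hwx, f_x]; exact hm (hyB m)
        · obtain ⟨n, hn⟩ := exists_ring (hAanti (Nat.zero_le m) hwAm) hwx
          have hmn : m ≤ n := by
            by_contra hc
            exact hn.2 (hAanti (by omega : n + 1 ≤ m) hwAm)
          rw [f_ring hn]
          exact hm (hBanti hmn (ring_val hn).1)
      show Filter.Tendsto f (nhdsWithin x (A 0)) (nhds (f x))
      rw [f_x]
      exact key
    · obtain ⟨n, hn⟩ := exists_ring hz0 hzx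
      have hRc : IsClopen (A n \ A (n + 1)) := (hA n).diff (hA (n + 1))
      have h1 : ContinuousWithinAt (fn n) (A n \ A (n + 1)) z := (hfn n).cont z hn
      have h2 : ContinuousWithinAt f (A n \ A (n + 1)) z :=
        h1.congr (fun w hw => f_ring hw) (f_ring hn)
      exact h2.mono_of_mem_nhdsWithin (mem_nhdsWithin_of_mem_nhds (hRc.isOpen.mem_nhds hn))
  exact ⟨f, ⟨hcont, hinj, himg, hmemF⟩, f_x⟩

theorem core_lemma (hss : SelfSimilarPair F) (hx : MaximalEnd F x) (hy : MaximalEnd F y)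
    (hxyF : x ∈ F ↔ y ∈ F) (hcase : x = y ∨ Disjoint U V)
    (hU : IsClopen U) (hxU : x ∈ U) (hV : IsClopen V) (hyV : y ∈ V) :
    ∃ f, GoodMap F U V f ∧ f x = y := by
  classical
  obtain ⟨Cx, hCx, hCxB⟩ := (nhds_basis_clopen x).exists_antitone_subbasis
  obtain ⟨Cy, hCy, hCyB⟩ := (nhds_basis_clopen y).exists_antitone_subbasis
  let Inv : Set E × Set E → Prop := fun p =>
    IsClopen p.1 ∧ IsClopen p.2 ∧ x ∈ p.1 ∧ y ∈ p.2 ∧ p.1 ⊆ U ∧ p.2 ⊆ V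
  have hstep : ∀ p : Set E × Set E, Inv p → ∀ n : ℕ,
      ∃ q : Set E × Set E, Inv q ∧ q.1 ⊆ p.1 ∩ Cx n ∧ q.2 ⊆ p.2 ∩ Cy n ∧
        ∃ f, GoodMap F (p.1 \ q.1) (p.2 \ q.2) f := by
    rintro ⟨a, b⟩ ⟨hac, hbc, hxa, hyb, haU, hbV⟩ n
    obtain ⟨A', B', hA'c, hB'c, hxA', hyB', hA'sub, hB'sub, hring⟩ :=
      step_lemma hss hx hy hcase hU hV hac hbc hxa hyb haU hbV
        (hCx n).2 (hCy n).2 (hCx n).1 (hCy n).1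
    exact ⟨(A', B'), ⟨hA'c, hB'c, hxA', hyB',
      fun z hz => haU (hA'sub hz).1, fun z hz => hbV (hB'sub hz).1⟩,
      hA'sub, hB'sub, hring⟩
  have hUV : Inv (U, V) := ⟨hU, hV, hxU, hyV, le_refl _, le_refl _⟩
  let stepF : {p : Set E × Set E // Inv p} → ℕ → {p : Set E × Set E // Inv p} :=
    fun p n => ⟨(hstep p.1 p.2 n).choose, (hstep p.1 p.2 n).choose_spec.1⟩
  let seq : ℕ → {p : Set E × Set E // Inv p} :=
    fun n => Nat.rec ⟨(U, V), hUV⟩ (fun n p => stepF p n) n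
  set A : ℕ → Set E := fun n => (seq n).1.1 with hAdef
  set B : ℕ → Set E := fun n => (seq n).1.2 with hBdef
  have hspec : ∀ n, A (n + 1) ⊆ A n ∩ Cx n ∧ B (n + 1) ⊆ B n ∩ Cy n ∧
      ∃ f, GoodMap F (A n \ A (n + 1)) (B n \ B (n + 1)) f := by
    intro n
    have h := (hstep (seq n).1 (seq n).2 n).choose_spec
    exact ⟨h.2.1, h.2.2.1, h.2.2.2⟩
  have hAc : ∀ n, IsClopen (A n) := fun n => (seq n).2.1
  have hBc : ∀ n, IsClopen (B n) := fun n => (seq n).2.2.1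
  have hxAn : ∀ n, x ∈ A n := fun n => (seq n).2.2.2.1
  have hyBn : ∀ n, y ∈ B n := fun n => (seq n).2.2.2.2.1
  have hAm : ∀ n, A (n + 1) ⊆ A n := fun n => (hspec n).1.trans Set.inter_subset_left
  have hBm : ∀ n, B (n + 1) ⊆ B n := fun n => (hspec n).2.1.trans Set.inter_subset_left
  have hiA : ⋂ n, A n = {x} := by
    apply Set.Subset.antisymm
    · intro z hz
      rw [Set.mem_iInter] at hz
      rw [Set.mem_singleton_iff]
      by_contra hzx
      have hne : ({z}ᶜ : Set E) ∈ nhds x :=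
        isOpen_compl_singleton.mem_nhds (by simpa using Ne.symm hzx)
      obtain ⟨n, -, hn⟩ := hCxB.toHasBasis.mem_iff.mp hne
      exact hn ((hspec n).1 (hz (n + 1))).2 rfl
    · intro z hz
      rw [Set.mem_singleton_iff] at hz
      subst hz
      exact Set.mem_iInter.mpr hxAn
  have hiB : ⋂ n, B n = {y} := by
    apply Set.Subset.antisymm
    · intro z hz
      rw [Set.mem_iInter] at hz
      rw [Set.mem_singleton_iff]
      by_contra hzy
      have hne : ({z}ᶜ : Set E) ∈ nhds y :=
        isOpen_compl_singleton.mem_nhds (by simpa using Ne.symm hzy)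
      obtain ⟨n, -, hn⟩ := hCyB.toHasBasis.mem_iff.mp hne
      exact hn ((hspec n).2.1 (hz (n + 1))).2 rfl
    · intro z hz
      rw [Set.mem_singleton_iff] at hz
      subst hz
      exact Set.mem_iInter.mpr hyBn
  obtain ⟨f, hgood, hfx⟩ := glue_lemma hAc hBc hAm hBm hiA hiB hxyF
    (fun n => (hspec n).2.2)
  exact ⟨f, hgood, hfx⟩

theorem maximal_mem_F (hss : SelfSimilarPair F) (hF : IsClosed F)
    (hx : MaximalEnd F x) (hFne : F.Nonempty) : x ∈ F := by
  rw [← hF.closure_eq, mem_closure_iff_nhds]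
  intro t ht
  obtain ⟨W, ⟨hxW, hWc⟩, hWt⟩ := (nhds_basis_clopen x).mem_iff.mp ht
  obtain ⟨D, g, hDc, hDW, hg⟩ := hasCopy_of_maximal hss hx hWc hxW
  obtain ⟨p, hp⟩ := hFne
  have h1 : g p ∈ D := hg.image ▸ Set.mem_image_of_mem g (Set.mem_univ p)
  exact ⟨g p, hWt (hDW h1), (hg.mem p (Set.mem_univ p)).mpr hp⟩

end Aux

theorem maximal_ends_clopen_nbhds_pair_homeo
    (F : Set E) (hF : IsClosed F) (hss : SelfSimilarPair F)
    (x y : E) (hx : MaximalEnd F x) (hy : MaximalEnd F y)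
    (U V : Set E) (hU : IsClopen U) (hxU : x ∈ U) (hV : IsClopen V) (hyV : y ∈ V) :
    ∃ φ : U ≃ₜ V, (∀ z : U, ((φ z : E) ∈ F ↔ (z : E) ∈ F)) ∧ (φ ⟨x, hxU⟩ : E) = y := by
  have hxyF : x ∈ F ↔ y ∈ F := by
    by_cases hFe : F.Nonempty
    · simp [maximal_mem_F hss hF hx hFe, maximal_mem_F hss hF hy hFe]
    · rw [Set.not_nonempty_iff_eq_empty] at hFe
      subst hFe; simp
  have main : ∃ f, GoodMap F U V f ∧ f x = y := by
    by_cases hxy : x = y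
    · subst hxy
      exact core_lemma hss hx hy hxyF (Or.inl rfl) hU hxU hV hyV
    · -- separate x and y by a clopen set
      obtain ⟨W, ⟨hxW, hWc⟩, hWy⟩ := (nhds_basis_clopen x).mem_iff.mp
        (isOpen_compl_singleton.mem_nhds (by simpa using hxy) : ({y}ᶜ : Set E) ∈ nhds x)
      have hyWc : y ∈ Wᶜ := fun hyW => hWy hyW rfl
      obtain ⟨f₁, hf₁, hf₁x⟩ := core_lemma hss hx hx Iff.rfl (Or.inl rfl) hU hxU hWc hxW
      obtain ⟨f₂, hf₂, hf₂x⟩ := core_lemma hss hx hy hxyF (Or.inr disjoint_compl_right)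
        hWc hxW hWc.compl hyWc
      obtain ⟨f₃, hf₃, hf₃y⟩ := core_lemma hss hy hy Iff.rfl (Or.inl rfl) hWc.compl hyWc hV hyV
      exact ⟨f₃ ∘ f₂ ∘ f₁, goodMap_comp (goodMap_comp hf₁ hf₂) hf₃,
        by simp [Function.comp, hf₁x, hf₂x, hf₃y]⟩
  obtain ⟨f, hf, hfx⟩ := main
  obtain ⟨φ, hφ1, hφ2⟩ := homeo_of_goodMap hU.isClosed hf
  exact ⟨φ, hφ2, by rw [hφ1 ⟨x, hxU⟩]; exact hfx⟩
end

section
/- Let (E,F) be a uniformly self-similar ends space. Then there exist a half-space H of (E,F), an involution τ ∈ Homeo(E,F), and an element g ∈ Homeo(E,F) such that φ = (g τ g⁻¹) τ is an H-translation, i.e., the sets φⁿ(H), n ∈ ℤ, are pairwise disjoint. In particular, there is an H-translation that is a product of two conjugates of a single involution. -/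
section Aux

open Set Metric

variable {E : Type*} [TopologicalSpace E]

/-- Data of a clopen pair isomorphism between `A` and `B`, as global functions. -/
structure CPI (F A B : Set E) : Type _ where
  toFun : E → E
  invFun : E → E
  maps : ∀ x ∈ A, toFun x ∈ B
  maps' : ∀ x ∈ B, invFun x ∈ A
  left : ∀ x ∈ A, invFun (toFun x) = x
  right : ∀ x ∈ B, toFun (invFun x) = x
  contOn : ContinuousOn toFun A
  contOn' : ContinuousOn invFun B
  presF : ∀ x ∈ A, (toFun x ∈ F ↔ x ∈ F)

namespace CPI

variable {F A B C : Set E}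

def refl (F A : Set E) : CPI F A A where
  toFun := id
  invFun := id
  maps := fun x hx => hx
  maps' := fun x hx => hx
  left := fun x _ => rfl
  right := fun x _ => rfl
  contOn := continuousOn_id
  contOn' := continuousOn_id
  presF := fun x _ => Iff.rfl

def symm (c : CPI F A B) : CPI F B A where
  toFun := c.invFun
  invFun := c.toFun
  maps := c.maps'
  maps' := c.maps
  left := c.right
  right := c.left
  contOn := c.contOn'
  contOn' := c.contOn
  presF := fun x hx => by
    have h := c.presF (c.invFun x) (c.maps' x hx)
    rw [c.right x hx] at h
    exact h.symm

def trans (c : CPI F A B) (d : CPI F B C) : CPI F A C where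
  toFun := d.toFun ∘ c.toFun
  invFun := c.invFun ∘ d.invFun
  maps := fun x hx => d.maps _ (c.maps x hx)
  maps' := fun x hx => c.maps' _ (d.maps' x hx)
  left := fun x hx => by
    simp only [Function.comp_apply, d.left _ (c.maps x hx), c.left x hx]
  right := fun x hx => by
    simp only [Function.comp_apply, c.right _ (d.maps' x hx), d.right x hx]
  contOn := d.contOn.comp c.contOn (fun x hx => c.maps x hx)
  contOn' := c.contOn'.comp d.contOn' (fun x hx => d.maps' x hx)
  presF := fun x hx => (d.presF _ (c.maps x hx)).trans (c.presF x hx)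

def cast {A A' B B' : Set E} (c : CPI F A B) (h1 : A = A') (h2 : B = B') : CPI F A' B' :=
  h1 ▸ h2 ▸ c

@[simp] theorem cast_toFun {A A' B B' : Set E} (c : CPI F A B) (h1 : A = A') (h2 : B = B') :
    (c.cast h1 h2).toFun = c.toFun := by cases h1; cases h2; rfl

@[simp] theorem cast_invFun {A A' B B' : Set E} (c : CPI F A B) (h1 : A = A') (h2 : B = B') :
    (c.cast h1 h2).invFun = c.invFun := by cases h1; cases h2; rfl

theorem image_eq (c : CPI F A B) : c.toFun '' A = B := by
  apply Set.Subset.antisymm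
  · rintro _ ⟨x, hx, rfl⟩; exact c.maps x hx
  · intro y hy; exact ⟨c.invFun y, c.maps' y hy, c.right y hy⟩

theorem image_subset (c : CPI F A B) {S : Set E} (hSA : S ⊆ A) : c.toFun '' S ⊆ B := by
  rintro _ ⟨x, hx, rfl⟩; exact c.maps x (hSA hx)

def restrict (c : CPI F A B) (S : Set E) (hSA : S ⊆ A) : CPI F S (c.toFun '' S) where
  toFun := c.toFun
  invFun := c.invFun
  maps := fun x hx => ⟨x, hx, rfl⟩
  maps' := by rintro _ ⟨x, hx, rfl⟩; rw [c.left x (hSA hx)]; exact hx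
  left := fun x hx => c.left x (hSA hx)
  right := by rintro _ ⟨x, hx, rfl⟩; rw [c.left x (hSA hx)]
  contOn := c.contOn.mono hSA
  contOn' := c.contOn'.mono (c.image_subset hSA)
  presF := fun x hx => c.presF x (hSA hx)

theorem image_restrict_eq (c : CPI F A B) {S : Set E} (hSA : S ⊆ A) :
    c.toFun '' S = B ∩ c.invFun ⁻¹' S := by
  apply Set.Subset.antisymm
  · rintro _ ⟨x, hx, rfl⟩
    exact ⟨c.maps x (hSA hx), by simpa [c.left x (hSA hx)] using hx⟩
  · rintro y ⟨hyB, hyS⟩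
    exact ⟨c.invFun y, hyS, c.right y hyB⟩

theorem isClopen_image (c : CPI F A B) {S : Set E} (hSA : S ⊆ A)
    (hB : IsClopen B) (hS : IsClopen S) : IsClopen (c.toFun '' S) := by
  rw [c.image_restrict_eq hSA]
  exact ⟨c.contOn'.preimage_isClosed_of_isClosed hB.1 hS.1,
    c.contOn'.isOpen_inter_preimage hB.2 hS.2⟩

noncomputable def toHomeo (c : CPI F A B) : A ≃ₜ B where
  toFun := fun x => ⟨c.toFun x, c.maps x x.2⟩
  invFun := fun y => ⟨c.invFun y, c.maps' y y.2⟩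
  left_inv := fun x => Subtype.ext (c.left x x.2)
  right_inv := fun y => Subtype.ext (c.right y y.2)
  continuous_toFun := (c.contOn.restrict).subtype_mk _
  continuous_invFun := (c.contOn'.restrict).subtype_mk _

theorem toPairHomeo (c : CPI F A B) : PairHomeo F A B :=
  ⟨c.toHomeo, fun x => c.presF x x.2⟩

theorem ofPairHomeo (h : PairHomeo F A B) : Nonempty (CPI F A B) := by
  obtain ⟨e, he⟩ := h
  classical
  refine ⟨⟨fun x => if hx : x ∈ A then (e ⟨x, hx⟩ : E) else x,
    fun y => if hy : y ∈ B then (e.symm ⟨y, hy⟩ : E) else y, ?_, ?_, ?_, ?_, ?_, ?_, ?_⟩⟩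
  · intro x hx; simpa [hx] using (e ⟨x, hx⟩).2
  · intro y hy; simpa [hy] using (e.symm ⟨y, hy⟩).2
  · intro x hx
    simp only [hx, dif_pos, (e ⟨x, hx⟩).2]
    have : (⟨(e ⟨x, hx⟩ : E), (e ⟨x, hx⟩).2⟩ : B) = e ⟨x, hx⟩ := rfl
    rw [this, e.symm_apply_apply]
  · intro y hy
    simp only [hy, dif_pos, (e.symm ⟨y, hy⟩).2]
    have : (⟨(e.symm ⟨y, hy⟩ : E), (e.symm ⟨y, hy⟩).2⟩ : A) = e.symm ⟨y, hy⟩ := rfl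
    rw [this, e.apply_symm_apply]
  · rw [continuousOn_iff_continuous_restrict]
    have : A.domRestrict (fun x => if hx : x ∈ A then (e ⟨x, hx⟩ : E) else x)
        = fun x : A => (e x : E) := by
      funext x; exact dif_pos x.2
    rw [this]
    exact continuous_subtype_val.comp e.continuous
  · rw [continuousOn_iff_continuous_restrict]
    have : B.domRestrict (fun y => if hy : y ∈ B then (e.symm ⟨y, hy⟩ : E) else y)
        = fun y : B => (e.symm y : E) := by
      funext y; exact dif_pos y.2
    rw [this]
    exact continuous_subtype_val.comp e.symm.continuous
  · intro x hx
    simpa [hx] using he ⟨x, hx⟩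

end CPI
end Aux
section Aux2

open Set Metric

variable {E : Type*} [MetricSpace E] [CompactSpace E] [TotallyDisconnectedSpace E]
  [Nonempty E] {F : Set E}

/-- A copy of `(E,F)`: a clopen set pair-isomorphic to the whole space. -/
def IsCopy (F C : Set E) : Prop := IsClopen C ∧ Nonempty (CPI F C Set.univ)

theorem isCopy_univ : IsCopy F (Set.univ : Set E) := ⟨isClopen_univ, ⟨CPI.refl F _⟩⟩

theorem IsCopy.nonempty {C : Set E} (hC : IsCopy F C) : C.Nonempty := by
  obtain ⟨c⟩ := hC.2
  obtain ⟨x⟩ := ‹Nonempty E›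
  exact ⟨c.invFun x, c.maps' x (Set.mem_univ x)⟩

/-- Finite partition of a compact metrizable totally disconnected space into
nonempty clopen sets of small diameter. -/
theorem exists_clopen_partition (ε : ℝ) (hε : 0 < ε) :
    ∃ (n : ℕ) (P : Fin n → Set E), (∀ i, IsClopen (P i)) ∧ (∀ i, (P i).Nonempty) ∧
      Pairwise (Function.onFun Disjoint P) ∧ (⋃ i, P i) = Set.univ ∧
      ∀ i, Metric.diam (P i) ≤ ε := by
  classical
  have hV : ∀ x : E, ∃ V : Set E, IsClopen V ∧ x ∈ V ∧ V ⊆ ball x (ε / 2) :=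
    fun x => compact_exists_isClopen_in_isOpen isOpen_ball (mem_ball_self (half_pos hε))
  choose V hVc hVm hVs using hV
  obtain ⟨t, ht⟩ := isCompact_univ.elim_finite_subcover V (fun x => (hVc x).2)
    (fun x _ => Set.mem_iUnion.2 ⟨x, hVm x⟩)
  have htne : ∀ x : E, ∃ i ∈ t, x ∈ V i := by
    intro x
    have := ht (Set.mem_univ x)
    simpa using this
  have hdiam : ∀ x, Metric.diam (V x) ≤ ε := by
    intro x
    calc Metric.diam (V x) ≤ Metric.diam (ball x (ε / 2)) :=
          diam_mono (hVs x) isBounded_ball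
      _ ≤ 2 * (ε / 2) := diam_ball (by linarith)
      _ = ε := by ring
  -- enumerate t
  let k := t.card
  let e : Fin k ≃ {x // x ∈ t} := (t.equivFin).symm
  let W : Fin k → Set E := fun i => V (e i)
  have hWc : ∀ i, IsClopen (W i) := fun i => hVc _
  have hWcover : ∀ x : E, ∃ i, x ∈ W i := by
    intro x
    obtain ⟨y, hyt, hy⟩ := htne x
    exact ⟨e.symm ⟨y, hyt⟩, by simpa [W] using hy⟩
  -- disjointify
  let P0 : Fin k → Set E := fun i => W i \ ⋃ j, ⋃ (_ : j < i), W j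
  have hP0c : ∀ i, IsClopen (P0 i) := by
    intro i
    refine (hWc i).diff (isClopen_iUnion_of_finite fun j => ?_)
    rw [Set.iUnion_eq_if]
    split
    · exact hWc j
    · exact isClopen_empty
  have hP0W : ∀ i, P0 i ⊆ W i := fun i => Set.diff_subset
  have hP0dW : ∀ i j, j < i → Disjoint (P0 i) (W j) := by
    intro i j hji
    rw [Set.disjoint_right]
    intro x hx hx'
    exact hx'.2 (Set.mem_iUnion.2 ⟨j, Set.mem_iUnion.2 ⟨hji, hx⟩⟩)
  have hP0cover : ∀ x : E, ∃ i, x ∈ P0 i := by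
    intro x
    have hne : (Finset.univ.filter (fun j => x ∈ W j)).Nonempty := by
      obtain ⟨i, hi⟩ := hWcover x
      exact ⟨i, by simp [hi]⟩
    set i := (Finset.univ.filter (fun j => x ∈ W j)).min' hne with hidef
    have hiW : x ∈ W i := by
      have := (Finset.univ.filter (fun j => x ∈ W j)).min'_mem hne
      simpa [← hidef] using this
    refine ⟨i, hiW, ?_⟩
    intro hx
    obtain ⟨j, hj⟩ := Set.mem_iUnion.1 hx
    obtain ⟨hji, hxj⟩ := Set.mem_iUnion.1 hj
    have : i ≤ j := Finset.min'_le _ _ (by simp [hxj])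
    exact absurd hji (not_lt.2 this)
  have hP0disj : ∀ i j, i ≠ j → Disjoint (P0 i) (P0 j) := by
    intro i j hij
    rcases lt_or_gt_of_ne hij with h | h
    · exact ((hP0dW j i h).mono_right (hP0W i)).symm
    · exact (hP0dW i j h).mono_right (hP0W j)
  -- keep only nonempty pieces
  let T := {i : Fin k // (P0 i).Nonempty}
  let n := Fintype.card T
  let q : T ≃ Fin n := Fintype.equivFin T
  refine ⟨n, fun i => P0 (q.symm i).1, fun i => hP0c _, fun i => (q.symm i).2, ?_, ?_, ?_⟩
  · intro i j hij
    refine hP0disj _ _ (fun hval => hij ?_)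
    have : q.symm i = q.symm j := Subtype.ext hval
    exact q.symm.injective.eq_iff.1 this |> fun h => h
  · apply Set.eq_univ_of_forall
    intro x
    obtain ⟨i, hi⟩ := hP0cover x
    refine Set.mem_iUnion.2 ⟨q ⟨i, ⟨x, hi⟩⟩, ?_⟩
    simpa using hi
  · intro i
    exact le_trans (diam_mono (hP0W _) (isCompact_univ.isBounded.subset (Set.subset_univ _)))
      (hdiam _)

theorem exists_small_copy (hss : SelfSimilarPair F) (ε : ℝ) (hε : 0 < ε) :
    ∃ D : Set E, IsCopy F D ∧ Metric.diam D ≤ ε := by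
  obtain ⟨n, P, hc, hne, hdisj, hcover, hdiam⟩ := exists_clopen_partition (E := E) ε hε
  obtain ⟨i, D, hD, hDP, hph⟩ := hss n P hc hne hdisj hcover
  exact ⟨D, ⟨hD, CPI.ofPairHomeo hph⟩,
    le_trans (diam_mono hDP (isCompact_univ.isBounded.subset (Set.subset_univ _))) (hdiam i)⟩

theorem IsCopy.small {C : Set E} (hC : IsCopy F C) (hss : SelfSimilarPair F)
    (ε : ℝ) (hε : 0 < ε) : ∃ D : Set E, IsCopy F D ∧ D ⊆ C ∧ Metric.diam D ≤ ε := by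
  obtain ⟨c⟩ := hC.2
  have hcont : Continuous c.invFun := continuousOn_univ.1 c.contOn'
  have huc := CompactSpace.uniformContinuous_of_continuous hcont
  obtain ⟨δ, hδ, hδ'⟩ := Metric.uniformContinuous_iff.1 huc ε hε
  obtain ⟨D₀, hD₀, hD₀diam⟩ := exists_small_copy hss (δ / 2) (half_pos hδ)
  obtain ⟨c₀⟩ := hD₀.2
  have hsub : D₀ ⊆ (Set.univ : Set E) := Set.subset_univ _
  refine ⟨c.symm.toFun '' D₀, ⟨?_, ⟨((c.symm.restrict D₀ hsub).symm).trans c₀⟩⟩, ?_, ?_⟩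
  · exact c.symm.isClopen_image hsub hC.1 hD₀.1
  · exact c.symm.image_subset hsub
  · refine diam_le_of_forall_dist_le hε.le ?_
    rintro _ ⟨x, hx, rfl⟩ _ ⟨y, hy, rfl⟩
    have : dist x y < δ := by
      have := dist_le_diam_of_mem
        (isCompact_univ.isBounded.subset (Set.subset_univ D₀)) hx hy
      linarith [hD₀diam]
    exact (hδ' this).le

/-- Generic recursion with an invariant. -/
theorem exists_seq {α : Type*} (Q : ℕ → α → α → Prop) (Inv : α → Prop) (a0 : α)
    (h0 : Inv a0) (hstep : ∀ n a, Inv a → ∃ b, Q n a b ∧ Inv b) :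
    ∃ f : ℕ → α, f 0 = a0 ∧ ∀ n, Inv (f n) ∧ Q n (f n) (f (n + 1)) := by
  choose g hg1 hg2 using hstep
  let Frec : ℕ → {a : α // Inv a} := fun n =>
    Nat.rec ⟨a0, h0⟩ (fun n ih => ⟨g n ih.1 ih.2, hg2 n ih.1 ih.2⟩) n
  refine ⟨fun n => (Frec n).1, rfl, fun n => ⟨(Frec n).2, ?_⟩⟩
  exact hg1 n (Frec n).1 (Frec n).2

theorem exists_copy_basis (hss : SelfSimilarPair F) :
    ∃ p : E, ∀ U : Set E, IsOpen U → p ∈ U → ∃ D : Set E, IsCopy F D ∧ D ⊆ U := by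
  obtain ⟨f, hf0, hf⟩ := exists_seq
    (fun n S S' => S' ⊆ S ∧ Metric.diam S' ≤ (1 / 2) ^ n) (IsCopy F) Set.univ isCopy_univ
    (fun n S hS => by
      obtain ⟨D, hD, hDS, hdiam⟩ := hS.small hss ((1 / 2) ^ n) (by positivity)
      exact ⟨D, ⟨hDS, hdiam⟩, hD⟩)
  have hcopy : ∀ n, IsCopy F (f n) := fun n => (hf n).1
  have hdec : ∀ n, f (n + 1) ⊆ f n := fun n => (hf n).2.1
  have hdiam : ∀ n, Metric.diam (f (n + 1)) ≤ (1 / 2) ^ n := fun n => (hf n).2.2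
  have hne : (⋂ n, f n).Nonempty := by
    refine IsCompact.nonempty_iInter_of_sequence_nonempty_isCompact_isClosed f hdec
      (fun n => (hcopy n).nonempty) ?_ (fun n => (hcopy n).1.1)
    exact ((hcopy 0).1.1).isCompact
  obtain ⟨p, hp⟩ := hne
  have hpn : ∀ n, p ∈ f n := fun n => Set.mem_iInter.1 hp n
  refine ⟨p, fun U hU hpU => ?_⟩
  obtain ⟨ε, hε, hball⟩ := Metric.isOpen_iff.1 hU p hpU
  obtain ⟨n, hn⟩ := exists_pow_lt_of_lt_one hε (by norm_num : (1 / 2 : ℝ) < 1)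
  refine ⟨f (n + 1), hcopy _, fun x hx => hball ?_⟩
  rw [mem_ball]
  calc dist x p ≤ Metric.diam (f (n + 1)) :=
        dist_le_diam_of_mem (isCompact_univ.isBounded.subset (Set.subset_univ _)) hx (hpn _)
    _ ≤ (1 / 2) ^ n := hdiam n
    _ < ε := hn

end Aux2
section Aux3

open Set Metric

variable {E : Type*} [MetricSpace E] [CompactSpace E] [TotallyDisconnectedSpace E]
  [Nonempty E] {F : Set E}

theorem EndsLE.trans' {x y z : E} (h1 : EndsLE F x y) (h2 : EndsLE F y z) :
    EndsLE F x z := by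
  intro U hU hzU
  obtain ⟨D, hDU, hDc, V, hVc, hyV, hph⟩ := h2 U hU hzU
  obtain ⟨D', hD'V, hD'c, V', hV'c, hxV', hph'⟩ := h1 V hVc hyV
  obtain ⟨k⟩ := CPI.ofPairHomeo hph
  obtain ⟨k'⟩ := CPI.ofPairHomeo hph'
  refine ⟨k.toFun '' D', ?_, ?_, V', hV'c, hxV', ?_⟩
  · exact (k.image_subset hD'V).trans hDU
  · exact k.isClopen_image hD'V hDc hD'c
  · exact (k'.trans (k.restrict D' hD'V)).toPairHomeo

theorem endsLE_of_copy_basis {p : E}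
    (hp : ∀ U : Set E, IsOpen U → p ∈ U → ∃ D : Set E, IsCopy F D ∧ D ⊆ U) (y : E) :
    EndsLE F y p := by
  intro U hU hpU
  obtain ⟨D, hD, hDU⟩ := hp U hU.2 hpU
  obtain ⟨c⟩ := hD.2
  exact ⟨D, hDU, hD.1, Set.univ, isClopen_univ, Set.mem_univ y, c.symm.toPairHomeo⟩

theorem endsLE_of_mem_maxSet (hclass : ∃ x, MaxSet F = {y | EndsEquiv F x y})
    {z w : E} (hz : z ∈ MaxSet F) (hw : w ∈ MaxSet F) : EndsLE F z w := by
  obtain ⟨x, hx⟩ := hclass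
  rw [hx] at hz hw
  exact (hz.2).trans' hw.1

theorem CPI.endsLE_invFun {C : Set E} (hC : IsClopen C) (c : CPI F C Set.univ) (x : E) :
    EndsLE F x (c.invFun x) := by
  intro U hU hzU
  have hxm : c.invFun x ∈ C := c.maps' x (Set.mem_univ x)
  have hSc : IsClopen (U ∩ C) := hU.inter hC
  have hSsub : U ∩ C ⊆ C := Set.inter_subset_right
  refine ⟨U ∩ C, Set.inter_subset_left, hSc, c.toFun '' (U ∩ C),
    c.isClopen_image hSsub isClopen_univ hSc, ?_, ?_⟩
  · exact ⟨c.invFun x, ⟨hzU, hxm⟩, c.right x (Set.mem_univ x)⟩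
  · exact (c.restrict (U ∩ C) hSsub).symm.toPairHomeo

theorem CPI.maximal_invFun {C : Set E} (hC : IsClopen C) (c : CPI F C Set.univ) {x : E}
    (hx : MaximalEnd F x) : MaximalEnd F (c.invFun x) := by
  intro w hw
  have h1 : EndsLE F x (c.invFun x) := c.endsLE_invFun hC x
  exact (hx w (h1.trans' hw)).trans' h1

theorem IsCopy.exists_maximal {C : Set E} (hC : IsCopy F C)
    (hne : (MaxSet F).Nonempty) : ∃ z ∈ C, MaximalEnd F z := by
  obtain ⟨c⟩ := hC.2
  obtain ⟨x, hx⟩ := hne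
  exact ⟨c.invFun x, c.maps' x (Set.mem_univ x), c.maximal_invFun hC.1 hx⟩

theorem exists_copy_in_clopen_of_maximal (hss : SelfSimilarPair F)
    (hclass : ∃ x, MaxSet F = {y | EndsEquiv F x y}) {z : E} (hz : MaximalEnd F z)
    {U : Set E} (hU : IsClopen U) (hzU : z ∈ U) : ∃ D : Set E, IsCopy F D ∧ D ⊆ U := by
  obtain ⟨p, hp⟩ := exists_copy_basis hss
  have hpmax : MaximalEnd F p := fun y _ => endsLE_of_copy_basis hp y
  have hple : EndsLE F p z := endsLE_of_mem_maxSet hclass hpmax hz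
  obtain ⟨D', hD'U, hD'c, V, hVc, hpV, hph⟩ := hple U hU hzU
  obtain ⟨k⟩ := CPI.ofPairHomeo hph
  obtain ⟨D₀, hD₀, hD₀V⟩ := hp V hVc.2 hpV
  obtain ⟨c₀⟩ := hD₀.2
  exact ⟨k.toFun '' D₀, ⟨k.isClopen_image hD₀V hD'c hD₀.1,
    ⟨((k.restrict D₀ hD₀V).symm).trans c₀⟩⟩, (k.image_subset hD₀V).trans hD'U⟩

theorem maxSet_three (hcantor : Nonempty (↥(MaxSet F) ≃ₜ (ℕ → Bool))) :
    ∃ x1 x2 x3 : E, x1 ∈ MaxSet F ∧ x2 ∈ MaxSet F ∧ x3 ∈ MaxSet F ∧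
      x1 ≠ x2 ∧ x1 ≠ x3 ∧ x2 ≠ x3 := by
  obtain ⟨e⟩ := hcantor
  have hinj : Function.Injective (fun b : ℕ → Bool => ((e.symm b : ↥(MaxSet F)) : E)) := by
    intro a b hab
    exact e.symm.injective (Subtype.ext hab)
  set b1 : ℕ → Bool := fun _ => false with hb1
  set b2 : ℕ → Bool := fun _ => true with hb2
  set b3 : ℕ → Bool := fun n => decide (n = 0) with hb3
  have h12 : b1 ≠ b2 := fun h => by simpa [hb1, hb2] using congrFun h 0
  have h13 : b1 ≠ b3 := fun h => by simpa [hb1, hb3] using congrFun h 0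
  have h23 : b2 ≠ b3 := fun h => by simpa [hb2, hb3] using congrFun h 1
  exact ⟨(e.symm b1 : ↥(MaxSet F)), (e.symm b2 : ↥(MaxSet F)), (e.symm b3 : ↥(MaxSet F)),
    (e.symm b1).2, (e.symm b2).2, (e.symm b3).2,
    fun h => h12 (hinj h), fun h => h13 (hinj h), fun h => h23 (hinj h)⟩

theorem exists_three_copies (hss : SelfSimilarPair F)
    (hclass : ∃ x, MaxSet F = {y | EndsEquiv F x y})
    (hcantor : Nonempty (↥(MaxSet F) ≃ₜ (ℕ → Bool)))
    {U : Set E} (hU : IsClopen U) (hzU : ∃ z ∈ U, MaximalEnd F z) (ε : ℝ) (hε : 0 < ε) :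
    ∃ S X Y : Set E, IsCopy F S ∧ IsCopy F X ∧ IsCopy F Y ∧ S ⊆ U ∧ X ⊆ U ∧ Y ⊆ U ∧
      Disjoint S X ∧ Disjoint S Y ∧ Disjoint X Y ∧ Metric.diam S ≤ ε := by
  obtain ⟨z, hzU', hz⟩ := hzU
  obtain ⟨C, hC, hCU⟩ := exists_copy_in_clopen_of_maximal hss hclass hz hU hzU'
  obtain ⟨c⟩ := hC.2
  obtain ⟨x1, x2, x3, hm1, hm2, hm3, h12, h13, h23⟩ := maxSet_three hcantor
  have hinj : ∀ a b : E, c.invFun a = c.invFun b → a = b := by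
    intro a b hab
    have := congrArg c.toFun hab
    rwa [c.right a (Set.mem_univ a), c.right b (Set.mem_univ b)] at this
  set z1 := c.invFun x1 with hz1
  set z2 := c.invFun x2 with hz2
  set z3 := c.invFun x3 with hz3
  have hz1C : z1 ∈ C := c.maps' x1 (Set.mem_univ x1)
  have hz2C : z2 ∈ C := c.maps' x2 (Set.mem_univ x2)
  have hz3C : z3 ∈ C := c.maps' x3 (Set.mem_univ x3)
  have hz1m : MaximalEnd F z1 := c.maximal_invFun hC.1 hm1
  have hz2m : MaximalEnd F z2 := c.maximal_invFun hC.1 hm2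
  have hz3m : MaximalEnd F z3 := c.maximal_invFun hC.1 hm3
  have hne12 : z1 ≠ z2 := fun h => h12 (hinj _ _ h)
  have hne13 : z1 ≠ z3 := fun h => h13 (hinj _ _ h)
  have hne23 : z2 ≠ z3 := fun h => h23 (hinj _ _ h)
  have hcl23 : IsClosed ({z2, z3} : Set E) := (Set.toFinite _).isClosed
  obtain ⟨W1, hW1c, hz1W1, hW1sub⟩ := compact_exists_isClopen_in_isOpen
    (hC.1.2.sdiff hcl23) (⟨hz1C, by simp [hne12, hne13]⟩ : z1 ∈ C \ {z2, z3})
  have hz2W1 : z2 ∉ W1 := fun h => (hW1sub h).2 (by simp)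
  have hz3W1 : z3 ∉ W1 := fun h => (hW1sub h).2 (by simp)
  have hcl3 : IsClosed ({z3} : Set E) := (Set.toFinite _).isClosed
  obtain ⟨W2, hW2c, hz2W2, hW2sub⟩ := compact_exists_isClopen_in_isOpen
    ((hC.1.2.sdiff hW1c.1).sdiff hcl3)
    (⟨⟨hz2C, hz2W1⟩, by simp [hne23]⟩ : z2 ∈ (C \ W1) \ {z3})
  set W3 := (C \ W1) \ W2 with hW3
  have hW3c : IsClopen W3 := (hC.1.diff hW1c).diff hW2c
  have hz3W3 : z3 ∈ W3 := ⟨⟨hz3C, hz3W1⟩, fun h => (hW2sub h).2 (by simp)⟩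
  obtain ⟨X, hX, hXW1⟩ := exists_copy_in_clopen_of_maximal hss hclass hz1m hW1c hz1W1
  obtain ⟨Y, hY, hYW2⟩ := exists_copy_in_clopen_of_maximal hss hclass hz2m hW2c hz2W2
  obtain ⟨S0, hS0, hS0W3⟩ := exists_copy_in_clopen_of_maximal hss hclass hz3m hW3c hz3W3
  obtain ⟨S, hS, hSS0, hSdiam⟩ := hS0.small hss ε hε
  have hW1U : W1 ⊆ U := fun x hx => hCU (hW1sub hx).1
  have hW2U : W2 ⊆ U := fun x hx => hCU (hW2sub hx).1.1
  have hW3U : W3 ⊆ U := fun x hx => hCU hx.1.1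
  have hdXW : Disjoint W3 W1 := by
    rw [Set.disjoint_left]; intro a ha ha1; exact ha.1.2 ha1
  have hdXW2 : Disjoint W3 W2 := by
    rw [Set.disjoint_left]; intro a ha ha2; exact ha.2 ha2
  have hdW12 : Disjoint W1 W2 := by
    rw [Set.disjoint_right]; intro a ha ha1; exact (hW2sub ha).1.2 ha1
  refine ⟨S, X, Y, hS, hX, hY, (hSS0.trans hS0W3).trans hW3U, hXW1.trans hW1U,
    hYW2.trans hW2U, ?_, ?_, ?_, hSdiam⟩
  · exact hdXW.mono (hSS0.trans hS0W3) hXW1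
  · exact hdXW2.mono (hSS0.trans hS0W3) hYW2
  · exact hdW12.mono hXW1 hYW2

end Aux3
/-- Index of the annulus in which the block `B n` lives. -/
def zidx (n : ℤ) : ℕ := max n.toNat (-n - 1).toNat

theorem zidx_nonneg {n : ℤ} (hn : 0 ≤ n) : zidx n = n.toNat := by
  simp only [zidx]; omega

theorem zidx_neg {n : ℤ} (hn : n < 0) : zidx n = (-n - 1).toNat := by
  simp only [zidx]; omega

theorem zidx_inj {n m : ℤ} (h : zidx n = zidx m) (hs : 0 ≤ n ↔ 0 ≤ m) : n = m := by
  simp only [zidx] at h; omega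

section Aux4

open Set Metric

variable {E : Type*} [MetricSpace E] [CompactSpace E] [TotallyDisconnectedSpace E]
  [Nonempty E] {F : Set E}

theorem exists_ladder (hss : SelfSimilarPair F)
    (hclass : ∃ x, MaxSet F = {y | EndsEquiv F x y})
    (hcantor : Nonempty (↥(MaxSet F) ≃ₜ (ℕ → Bool))) :
    ∃ (A : ℕ → Set E) (B : ℤ → Set E) (p : E),
      (∀ m, IsClopen (A m)) ∧ (∀ i m, i ≤ m → A m ⊆ A i) ∧ (∀ m, p ∈ A m) ∧
      (∀ U : Set E, IsOpen U → p ∈ U → ∃ m, A m ⊆ U) ∧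
      (∀ x : E, (∀ m, x ∈ A m) → x = p) ∧
      (∀ n, IsCopy F (B n)) ∧
      Pairwise (Function.onFun Disjoint B) ∧
      (∀ n, B n ⊆ A (zidx n)) ∧
      (∀ n, Disjoint (B n) (A (zidx n + 1))) := by
  have hMne : (MaxSet F).Nonempty := by
    obtain ⟨x1, _, _, h1, _⟩ := maxSet_three (F := F) hcantor
    exact ⟨x1, h1⟩
  obtain ⟨f, hf0, hf⟩ := exists_seq
    (fun n (t t' : Set E × Set E × Set E) =>
      t'.1 ⊆ t.1 ∧ t'.2.1 ⊆ t.1 ∧ t'.2.2 ⊆ t.1 ∧ IsCopy F t'.2.1 ∧ IsCopy F t'.2.2 ∧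
        Disjoint t'.1 t'.2.1 ∧ Disjoint t'.1 t'.2.2 ∧ Disjoint t'.2.1 t'.2.2 ∧
        Metric.diam t'.1 ≤ (1 / 2) ^ n)
    (fun t => IsCopy F t.1) (Set.univ, Set.univ, Set.univ) isCopy_univ
    (fun n t ht => by
      obtain ⟨S, X, Y, hS, hX, hY, hSU, hXU, hYU, hSX, hSY, hXY, hSdiam⟩ :=
        exists_three_copies hss hclass hcantor ht.1 (ht.exists_maximal hMne)
          ((1 / 2) ^ n) (by positivity)
      exact ⟨(S, X, Y), ⟨hSU, hXU, hYU, hX, hY, hSX, hSY, hXY, hSdiam⟩, hS⟩)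
  set A : ℕ → Set E := fun m => (f m).1 with hA
  have hAcopy : ∀ m, IsCopy F (A m) := fun m => (hf m).1
  have hAc : ∀ m, IsClopen (A m) := fun m => (hAcopy m).1
  have hAdec : ∀ m, A (m + 1) ⊆ A m := fun m => (hf m).2.1
  have hAanti : ∀ i m, i ≤ m → A m ⊆ A i := by
    intro i m him
    exact antitone_nat_of_succ_le hAdec him
  have hAdiam : ∀ m, Metric.diam (A (m + 1)) ≤ (1 / 2) ^ m := fun m => (hf m).2.2.2.2.2.2.2.2.2
  have hne : (⋂ m, A m).Nonempty := by
    refine IsCompact.nonempty_iInter_of_sequence_nonempty_isCompact_isClosed A hAdec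
      (fun m => (hAcopy m).nonempty) ((hAc 0).1.isCompact) (fun m => (hAc m).1)
  obtain ⟨p, hp⟩ := hne
  have hpA : ∀ m, p ∈ A m := fun m => Set.mem_iInter.1 hp m
  have hbasis : ∀ U : Set E, IsOpen U → p ∈ U → ∃ m, A m ⊆ U := by
    intro U hU hpU
    obtain ⟨ε, hε, hball⟩ := Metric.isOpen_iff.1 hU p hpU
    obtain ⟨n, hn⟩ := exists_pow_lt_of_lt_one hε (by norm_num : (1 / 2 : ℝ) < 1)
    refine ⟨n + 1, fun x hx => hball ?_⟩
    rw [mem_ball]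
    calc dist x p ≤ Metric.diam (A (n + 1)) :=
          dist_le_diam_of_mem (isCompact_univ.isBounded.subset (Set.subset_univ _)) hx (hpA _)
      _ ≤ (1 / 2) ^ n := hAdiam n
      _ < ε := hn
  have hsing : ∀ x : E, (∀ m, x ∈ A m) → x = p := by
    intro x hx
    by_contra hxp
    have hd : 0 < dist x p := dist_pos.2 hxp
    obtain ⟨n, hn⟩ := exists_pow_lt_of_lt_one hd (by norm_num : (1 / 2 : ℝ) < 1)
    have : dist x p ≤ (1 / 2) ^ n :=
      le_trans (dist_le_diam_of_mem
        (isCompact_univ.isBounded.subset (Set.subset_univ _)) (hx (n + 1)) (hpA (n + 1)))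
        (hAdiam n)
    linarith
  -- blocks
  set Bp : ℕ → Set E := fun m => (f (m + 1)).2.1 with hBp
  set Bm : ℕ → Set E := fun m => (f (m + 1)).2.2 with hBm
  have hBpA : ∀ m, Bp m ⊆ A m := fun m => (hf m).2.2.1
  have hBmA : ∀ m, Bm m ⊆ A m := fun m => (hf m).2.2.2.1
  have hBpcopy : ∀ m, IsCopy F (Bp m) := fun m => (hf m).2.2.2.2.1
  have hBmcopy : ∀ m, IsCopy F (Bm m) := fun m => (hf m).2.2.2.2.2.1
  have hABp : ∀ m, Disjoint (A (m + 1)) (Bp m) := fun m => (hf m).2.2.2.2.2.2.1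
  have hABm : ∀ m, Disjoint (A (m + 1)) (Bm m) := fun m => (hf m).2.2.2.2.2.2.2.1
  have hBpBm : ∀ m, Disjoint (Bp m) (Bm m) := fun m => (hf m).2.2.2.2.2.2.2.2.1
  classical
  set B : ℤ → Set E := fun n => if 0 ≤ n then Bp (zidx n) else Bm (zidx n) with hB
  have hBcopy : ∀ n, IsCopy F (B n) := by
    intro n
    simp only [hB]
    split
    · exact hBpcopy _
    · exact hBmcopy _
  have hBA : ∀ n, B n ⊆ A (zidx n) := by
    intro n
    simp only [hB]
    split
    · exact hBpA _
    · exact hBmA _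
  have hBdA : ∀ n, Disjoint (B n) (A (zidx n + 1)) := by
    intro n
    simp only [hB]
    split
    · exact (hABp _).symm
    · exact (hABm _).symm
  have hBdisj : Pairwise (Function.onFun Disjoint B) := by
    intro n m hnm
    rcases lt_trichotomy (zidx n) (zidx m) with h | h | h
    · exact ((hBdA n).mono_right ((hBA m).trans (hAanti _ _ h) : B m ⊆ A (zidx n + 1)))
    · -- same annulus, opposite signs
      have hs : ¬(0 ≤ n ↔ 0 ≤ m) := fun hiff => hnm (zidx_inj h hiff)
      simp only [Function.onFun, hB]
      rcases le_or_gt 0 n with hn | hn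
      · have hm : ¬ 0 ≤ m := fun hm => hs ⟨fun _ => hm, fun _ => hn⟩
        rw [if_pos hn, if_neg hm, h]
        exact hBpBm _
      · have hm : 0 ≤ m := by
          by_contra hm
          exact hs ⟨fun h' => absurd h' (not_le.2 hn), fun h' => absurd h' hm⟩
        rw [if_neg (not_le.2 hn), if_pos hm, ← h]
        exact (hBpBm _).symm
    · exact ((hBdA m).mono_right ((hBA n).trans (hAanti _ _ h) : B n ⊆ A (zidx m + 1))).symm
  exact ⟨A, B, p, hAc, hAanti, hpA, hbasis, hsing, hBcopy, hBdisj, hBA, hBdA⟩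

end Aux4
section Glue

open Set Metric

variable {E : Type*} [MetricSpace E] [CompactSpace E] [TotallyDisconnectedSpace E]
  [Nonempty E] {F : Set E}
variable {B : ℤ → Set E} {A : ℕ → Set E} {p : E} {π ρ : ℤ → ℤ}

open scoped Classical in
/-- The map glued from a family of clopen pair isomorphisms on disjoint blocks. -/
noncomputable def glueFun (B : ℤ → Set E) (π : ℤ → ℤ)
    (c : ∀ n, CPI F (B n) (B (π n))) : E → E := fun x =>
  if h : ∃ n, x ∈ B n then (c h.choose).toFun x else x

open scoped Classical in
/-- The inverse glued map. -/
noncomputable def glueFun' (B : ℤ → Set E) (π ρ : ℤ → ℤ)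
    (c : ∀ n, CPI F (B n) (B (π n))) : E → E := fun y =>
  if h : ∃ n, y ∈ B n then (c (ρ h.choose)).invFun y else y

theorem choose_mem_eq (hBdisj : Pairwise (Function.onFun Disjoint B)) {x : E} {n : ℤ}
    (hx : x ∈ B n) (h : ∃ m, x ∈ B m) : h.choose = n := by
  by_contra hne
  exact absurd hx (Set.disjoint_left.1 (hBdisj hne) h.choose_spec)

section basic

theorem glueFun_of_mem (hBdisj : Pairwise (Function.onFun Disjoint B))
    (c : ∀ n, CPI F (B n) (B (π n))) {x : E} {n : ℤ} (hx : x ∈ B n) :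
    glueFun B π c x = (c n).toFun x := by
  have h : ∃ m, x ∈ B m := ⟨n, hx⟩
  simp only [glueFun]
  rw [dif_pos h, choose_mem_eq hBdisj hx h]

theorem glueFun_of_not_mem (hBdisj : Pairwise (Function.onFun Disjoint B))
    (c : ∀ n, CPI F (B n) (B (π n))) {x : E} (hx : ∀ n, x ∉ B n) : glueFun B π c x = x := by
  simp only [glueFun]
  rw [dif_neg]
  rintro ⟨n, hn⟩
  exact hx n hn

theorem glueFun'_of_mem (hBdisj : Pairwise (Function.onFun Disjoint B))
    (c : ∀ n, CPI F (B n) (B (π n))) {y : E} {n : ℤ} (hy : y ∈ B n) :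
    glueFun' B π ρ c y = (c (ρ n)).invFun y := by
  have h : ∃ m, y ∈ B m := ⟨n, hy⟩
  simp only [glueFun']
  rw [dif_pos h, choose_mem_eq hBdisj hy h]

theorem glueFun'_of_not_mem (hBdisj : Pairwise (Function.onFun Disjoint B))
    (c : ∀ n, CPI F (B n) (B (π n))) {y : E} (hy : ∀ n, y ∉ B n) : glueFun' B π ρ c y = y := by
  simp only [glueFun']
  rw [dif_neg]
  rintro ⟨n, hn⟩
  exact hy n hn

theorem glueFun_leftInv (hBdisj : Pairwise (Function.onFun Disjoint B))
    (c : ∀ n, CPI F (B n) (B (π n))) (hρπ : ∀ n, ρ (π n) = n) (x : E) :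
    glueFun' B π ρ c (glueFun B π c x) = x := by
  by_cases h : ∃ n, x ∈ B n
  · obtain ⟨n, hn⟩ := h
    rw [glueFun_of_mem hBdisj c hn]
    have hmem : (c n).toFun x ∈ B (π n) := (c n).maps x hn
    rw [glueFun'_of_mem hBdisj c hmem, hρπ, (c n).left x hn]
  · push_neg at h
    rw [glueFun_of_not_mem hBdisj c h, glueFun'_of_not_mem hBdisj c h]

theorem glueFun_rightInv (hBdisj : Pairwise (Function.onFun Disjoint B))
    (c : ∀ n, CPI F (B n) (B (π n))) (hπρ : ∀ n, π (ρ n) = n) (y : E) :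
    glueFun B π c (glueFun' B π ρ c y) = y := by
  by_cases h : ∃ n, y ∈ B n
  · obtain ⟨n, hn⟩ := h
    rw [glueFun'_of_mem hBdisj c hn]
    have hn' : y ∈ B (π (ρ n)) := by rw [hπρ]; exact hn
    have hmem : (c (ρ n)).invFun y ∈ B (ρ n) := (c (ρ n)).maps' y hn'
    rw [glueFun_of_mem hBdisj c hmem, (c (ρ n)).right y hn']
  · push_neg at h
    rw [glueFun'_of_not_mem hBdisj c h, glueFun_of_not_mem hBdisj c h]

theorem glueFun_presF (hBdisj : Pairwise (Function.onFun Disjoint B))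
    (c : ∀ n, CPI F (B n) (B (π n))) (x : E) : glueFun B π c x ∈ F ↔ x ∈ F := by
  by_cases h : ∃ n, x ∈ B n
  · obtain ⟨n, hn⟩ := h
    rw [glueFun_of_mem hBdisj c hn]
    exact (c n).presF x hn
  · push_neg at h
    rw [glueFun_of_not_mem hBdisj c h]

theorem glueFun'_presF (hBdisj : Pairwise (Function.onFun Disjoint B))
    (c : ∀ n, CPI F (B n) (B (π n))) (hπρ : ∀ n, π (ρ n) = n) (y : E) :
    glueFun' B π ρ c y ∈ F ↔ y ∈ F := by
  by_cases h : ∃ n, y ∈ B n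
  · obtain ⟨n, hn⟩ := h
    rw [glueFun'_of_mem hBdisj c hn]
    have hn' : y ∈ B (π (ρ n)) := by rw [hπρ]; exact hn
    exact (c (ρ n)).symm.presF y hn'
  · push_neg at h
    rw [glueFun'_of_not_mem hBdisj c h]

theorem glueFun_image (hBdisj : Pairwise (Function.onFun Disjoint B))
    (c : ∀ n, CPI F (B n) (B (π n))) (n : ℤ) : glueFun B π c '' B n = B (π n) := by
  apply Set.Subset.antisymm
  · rintro _ ⟨x, hx, rfl⟩
    rw [glueFun_of_mem hBdisj c hx]
    exact (c n).maps x hx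
  · intro y hy
    refine ⟨(c n).invFun y, (c n).maps' y hy, ?_⟩
    rw [glueFun_of_mem hBdisj c ((c n).maps' y hy), (c n).right y hy]

theorem glueFun'_image (hBdisj : Pairwise (Function.onFun Disjoint B))
    (c : ∀ n, CPI F (B n) (B (π n))) (hπρ : ∀ n, π (ρ n) = n) (n : ℤ) :
    glueFun' B π ρ c '' B n = B (ρ n) := by
  apply Set.Subset.antisymm
  · rintro _ ⟨y, hy, rfl⟩
    rw [glueFun'_of_mem hBdisj c hy]
    have hy' : y ∈ B (π (ρ n)) := by rw [hπρ]; exact hy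
    exact (c (ρ n)).maps' y hy'
  · intro x hx
    have hmem : (c (ρ n)).toFun x ∈ B (π (ρ n)) := (c (ρ n)).maps x hx
    have hmem' : (c (ρ n)).toFun x ∈ B n := (congrArg B (hπρ n)).subset hmem
    refine ⟨(c (ρ n)).toFun x, hmem', ?_⟩
    rw [glueFun'_of_mem hBdisj c hmem', (c (ρ n)).left x hx]

end basic

/-- Generic continuity of a block map with respect to the ladder structure. -/
theorem glue_continuous_generic
    (hBc : ∀ n, IsClopen (B n))
    (hAc : ∀ m, IsClopen (A m)) (hAanti : ∀ i m, i ≤ m → A m ⊆ A i)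
    (hpA : ∀ m, p ∈ A m)
    (hbasis : ∀ U : Set E, IsOpen U → p ∈ U → ∃ m, A m ⊆ U)
    (hsing : ∀ x : E, (∀ m, x ∈ A m) → x = p)
    (hBA : ∀ n, B n ⊆ A (zidx n)) (hBdA : ∀ n, Disjoint (B n) (A (zidx n + 1)))
    {G : E → E} {σ : ℤ → ℤ}
    (hG1 : ∀ n, ∀ x ∈ B n, G x ∈ B (σ n)) (hG2 : ∀ n, ContinuousOn G (B n))
    (hG3 : ∀ x : E, (∀ n, x ∉ B n) → G x = x)
    (hσ : ∀ n, zidx n ≤ zidx (σ n) + 1) : Continuous G := by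
  rw [continuous_iff_continuousAt]
  intro x
  by_cases hx : ∃ n, x ∈ B n
  · obtain ⟨n, hxn⟩ := hx
    exact (hG2 n).continuousAt ((hBc n).2.mem_nhds hxn)
  push_neg at hx
  by_cases hxp : x = p
  · rw [hxp] at hx ⊢
    have hGp : G p = p := hG3 p hx
    rw [ContinuousAt, hGp, Filter.tendsto_def]
    intro s hs
    obtain ⟨U, hUs, hU, hpU⟩ := _root_.mem_nhds_iff.1 hs
    obtain ⟨M, hM⟩ := hbasis U hU hpU
    have key : A (M + 1) ⊆ G ⁻¹' s := by
      intro y hy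
      by_cases hyB : ∃ n, y ∈ B n
      · obtain ⟨n, hyn⟩ := hyB
        have hidx : M + 1 ≤ zidx n := by
          by_contra hlt
          push_neg at hlt
          have hsub : A (M + 1) ⊆ A (zidx n + 1) := hAanti _ _ (by omega)
          exact Set.disjoint_right.1 (hBdA n) (hsub hy) hyn
        have h1 : G y ∈ B (σ n) := hG1 n y hyn
        have h2 : B (σ n) ⊆ A M := (hBA (σ n)).trans (hAanti _ _ (by have := hσ n; omega))
        exact Set.mem_preimage.2 (hUs (hM (h2 h1)))
      · push_neg at hyB
        rw [Set.mem_preimage, hG3 y hyB]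
        exact hUs (hM (hAanti _ _ (by omega) hy))
    exact Filter.mem_of_superset ((hAc (M + 1)).2.mem_nhds (hpA (M + 1))) key
  · have hMx : ∃ M, x ∉ A M := by
      by_contra hall
      push_neg at hall
      exact hxp (hsing x hall)
    obtain ⟨M, hM⟩ := hMx
    classical
    set N : Set E := (Set.univ \ A M) \ ⋃ n ∈ Finset.Icc (-(M : ℤ)) (M : ℤ), B n with hN
    have hNc : IsClopen N := by
      refine (isClopen_univ.diff (hAc M)).diff ?_
      exact isClopen_biUnion_finset (fun i _ => hBc i)
    have hxN : x ∈ N := by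
      refine ⟨⟨Set.mem_univ x, hM⟩, ?_⟩
      intro hmem
      obtain ⟨n, _, hn⟩ := Set.mem_iUnion₂.1 hmem
      exact hx n hn
    have hNid : ∀ y ∈ N, G y = y := by
      intro y hy
      refine hG3 y (fun n hn => ?_)
      by_cases hidx : M ≤ zidx n
      · exact hy.1.2 (hAanti _ _ hidx (hBA n hn))
      · push_neg at hidx
        refine hy.2 (Set.mem_iUnion₂.2 ⟨n, ?_, hn⟩)
        simp only [Finset.mem_Icc]
        simp only [zidx] at hidx
        omega
    refine ContinuousAt.congr continuousAt_id ?_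
    refine Filter.eventuallyEq_of_mem (hNc.2.mem_nhds hxN) (fun y hy => ?_)
    exact (hNid y hy).symm

end Glue
section IntLemmas

theorem zidx_succ (n : ℤ) : zidx n ≤ zidx (n + 1) + 1 := by
  simp only [zidx]; omega

theorem zidx_pred (n : ℤ) : zidx n ≤ zidx (n - 1) + 1 := by
  simp only [zidx]; omega

open scoped Classical in
/-- The pairing permutation `2n ↔ 2n+1` of the indices. -/
noncomputable def tauIdx (n : ℤ) : ℤ := if Even n then n + 1 else n - 1

theorem tauIdx_even {n : ℤ} (h : Even n) : tauIdx n = n + 1 := if_pos h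

theorem tauIdx_odd {n : ℤ} (h : ¬Even n) : tauIdx n = n - 1 := if_neg h

theorem tauIdx_tauIdx (n : ℤ) : tauIdx (tauIdx n) = n := by
  by_cases h : Even n
  · rw [tauIdx_even h, tauIdx_odd (by simp [Int.even_add_one, h]), add_sub_cancel_right]
  · rw [tauIdx_odd h, tauIdx_even (by simpa [Int.even_sub_one] using h), sub_add_cancel]

theorem zidx_tauIdx (n : ℤ) : zidx n ≤ zidx (tauIdx n) + 1 := by
  by_cases h : Even n
  · rw [tauIdx_even h]; exact zidx_succ n
  · rw [tauIdx_odd h]; exact zidx_pred n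

end IntLemmas


variable {E : Type*} [TopologicalSpace E] [Nonempty E] [CompactSpace E]
  [TopologicalSpace.MetrizableSpace E] [TotallyDisconnectedSpace E]

theorem exists_translation_product_of_two_conjugate_involutions
    (F : Set E) (hF : IsClosed F) (huss : UniformlySelfSimilar F) :
    ∃ H : Set E, IsHalfSpace F H ∧ ∃ τ g : ↥(EndsHomeo F), τ ^ 2 = 1 ∧ τ ≠ 1 ∧
      IsHTranslation H ((g * τ * g⁻¹ * τ : ↥(EndsHomeo F)) : Equiv.Perm E) := by
  classical
  letI : MetricSpace E := TopologicalSpace.metrizableSpaceMetric E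
  obtain ⟨hss, hclass, hcantor⟩ := huss
  obtain ⟨A, B, p, hAc, hAanti, hpA, hbasis, hsing, hBcopy, hBdisj, hBA, hBdA⟩ :=
    exists_ladder hss hclass hcantor
  have hBc : ∀ n, IsClopen (B n) := fun n => (hBcopy n).1
  have hMne : (MaxSet F).Nonempty := by
    obtain ⟨x1, _, _, h1, _⟩ := maxSet_three (F := F) hcantor
    exact ⟨x1, h1⟩
  -- pair isomorphisms between consecutive blocks
  let cB : ∀ n : ℤ, CPI F (B n) Set.univ := fun n => ((hBcopy n).2).some
  let step : ∀ n : ℤ, CPI F (B n) (B (n + 1)) := fun n => (cB n).trans (cB (n + 1)).symm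
  -- the τ family
  obtain ⟨cτ, hcτe, hcτe', hcτo, hcτo'⟩ :
      ∃ cτ : ∀ n : ℤ, CPI F (B n) (B (tauIdx n)),
        (∀ n, Even n → (cτ n).toFun = (step n).toFun) ∧
        (∀ n, Even n → (cτ n).invFun = (step n).invFun) ∧
        (∀ n, ¬Even n → (cτ n).toFun = (step (n - 1)).invFun) ∧
        (∀ n, ¬Even n → (cτ n).invFun = (step (n - 1)).toFun) := by
    refine ⟨fun n =>
      if h : Even n then (step n).cast rfl (congrArg B (tauIdx_even h).symm)
      else ((step (n - 1)).symm).cast (congrArg B (sub_add_cancel n 1))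
        (congrArg B (tauIdx_odd h).symm), ?_, ?_, ?_, ?_⟩ <;>
    · intro n h
      simp [h, CPI.cast_toFun, CPI.cast_invFun, CPI.symm]
  -- the g family
  let cg : ∀ n : ℤ, CPI F (B n) (B ((fun m : ℤ => m + 1) n)) := step
  -- glued functions
  set τfun : E → E := glueFun B tauIdx cτ with hτfun
  set τinv : E → E := glueFun' B tauIdx tauIdx cτ with hτinv
  set gfun : E → E := glueFun B (fun m : ℤ => m + 1) cg with hgfun
  set ginv : E → E := glueFun' B (fun m : ℤ => m + 1) (fun m : ℤ => m - 1) cg with hginv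
  have hρπτ : ∀ n : ℤ, tauIdx (tauIdx n) = n := tauIdx_tauIdx
  have hρπg : ∀ n : ℤ, (fun m : ℤ => m - 1) ((fun m : ℤ => m + 1) n) = n := by
    intro n; simp
  have hπρg : ∀ n : ℤ, (fun m : ℤ => m + 1) ((fun m : ℤ => m - 1) n) = n := by
    intro n; simp
  -- permutations
  set τperm : Equiv.Perm E :=
    ⟨τfun, τinv, glueFun_leftInv hBdisj cτ hρπτ, glueFun_rightInv hBdisj cτ hρπτ⟩
    with hτperm
  set gperm : Equiv.Perm E :=
    ⟨gfun, ginv, glueFun_leftInv hBdisj cg hρπg, glueFun_rightInv hBdisj cg hπρg⟩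
    with hgperm
  -- continuity
  have contτ : Continuous τfun := by
    refine glue_continuous_generic hBc hAc hAanti hpA hbasis hsing hBA hBdA
      (σ := tauIdx) ?_ ?_ ?_ zidx_tauIdx
    · intro n x hx
      rw [hτfun, glueFun_of_mem hBdisj cτ hx]
      exact (cτ n).maps x hx
    · intro n
      exact ((cτ n).contOn).congr (fun x hx => glueFun_of_mem hBdisj cτ hx)
    · intro x hx
      exact glueFun_of_not_mem hBdisj cτ hx
  have contτ' : Continuous τinv := by
    refine glue_continuous_generic hBc hAc hAanti hpA hbasis hsing hBA hBdA
      (σ := tauIdx) ?_ ?_ ?_ zidx_tauIdx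
    · intro n x hx
      rw [hτinv, glueFun'_of_mem hBdisj cτ hx]
      exact (cτ (tauIdx n)).maps' x ((congrArg B (tauIdx_tauIdx n).symm).subset hx)
    · intro n
      refine (((cτ (tauIdx n)).contOn').mono
        ((congrArg B (tauIdx_tauIdx n)).symm.subset)).congr
        (fun y hy => glueFun'_of_mem hBdisj cτ hy)
    · intro y hy
      exact glueFun'_of_not_mem hBdisj cτ hy
  have contg : Continuous gfun := by
    refine glue_continuous_generic hBc hAc hAanti hpA hbasis hsing hBA hBdA
      (σ := fun m : ℤ => m + 1) ?_ ?_ ?_ zidx_succ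
    · intro n x hx
      rw [hgfun, glueFun_of_mem hBdisj cg hx]
      exact (cg n).maps x hx
    · intro n
      exact ((cg n).contOn).congr (fun x hx => glueFun_of_mem hBdisj cg hx)
    · intro x hx
      exact glueFun_of_not_mem hBdisj cg hx
  have contg' : Continuous ginv := by
    refine glue_continuous_generic hBc hAc hAanti hpA hbasis hsing hBA hBdA
      (σ := fun m : ℤ => m - 1) ?_ ?_ ?_ zidx_pred
    · intro n x hx
      rw [hginv, glueFun'_of_mem hBdisj cg hx]
      exact (cg (n - 1)).maps' x ((congrArg B (sub_add_cancel n 1).symm).subset hx)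
    · intro n
      refine (((cg (n - 1)).contOn').mono
        ((congrArg B (sub_add_cancel n 1)).symm.subset)).congr
        (fun y hy => glueFun'_of_mem hBdisj cg hy)
    · intro y hy
      exact glueFun'_of_not_mem hBdisj cg hy
  -- membership in the homeomorphism group
  have memτ : τperm ∈ EndsHomeo F := by
    refine ⟨contτ, contτ', fun x => ?_⟩
    exact glueFun_presF hBdisj cτ x
  have memg : gperm ∈ EndsHomeo F := by
    refine ⟨contg, contg', fun x => ?_⟩
    exact glueFun_presF hBdisj cg x
  set τe : ↥(EndsHomeo F) := ⟨τperm, memτ⟩ with hτe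
  set ge : ↥(EndsHomeo F) := ⟨gperm, memg⟩ with hge
  -- τ is an involution
  have hττ : ∀ x : E, τfun (τfun x) = x := by
    intro x
    by_cases hx : ∃ n, x ∈ B n
    · obtain ⟨n, hxn⟩ := hx
      rw [hτfun, glueFun_of_mem hBdisj cτ hxn]
      have hy : (cτ n).toFun x ∈ B (tauIdx n) := (cτ n).maps x hxn
      rw [glueFun_of_mem hBdisj cτ hy]
      by_cases h : Even n
      · have h2 : ¬Even (tauIdx n) := by
          rw [tauIdx_even h]; simp [Int.even_add_one, h]
        rw [hcτo _ h2, hcτe _ h]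
        have h3 : tauIdx n - 1 = n := by rw [tauIdx_even h]; ring
        rw [h3]
        exact (step n).left x hxn
      · have h2 : Even (tauIdx n) := by
          rw [tauIdx_odd h]; simpa [Int.even_sub_one] using h
        rw [hcτe _ h2, hcτo _ h]
        have h3 : tauIdx n = n - 1 := tauIdx_odd h
        rw [h3]
        exact (step (n - 1)).right x ((congrArg B (sub_add_cancel n 1).symm).subset hxn)
    · push_neg at hx
      rw [hτfun, glueFun_of_not_mem hBdisj cτ hx, glueFun_of_not_mem hBdisj cτ hx]
  have hτsq : τe ^ 2 = 1 := by
    rw [sq]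
    refine Subtype.ext ?_
    refine Equiv.ext fun x => ?_
    exact hττ x
  have hτne : τe ≠ 1 := by
    intro h
    obtain ⟨x, hx0⟩ := (hBcopy 0).nonempty
    have h1 : τfun x = x := by
      have := congrArg (fun z : ↥(EndsHomeo F) => (z : Equiv.Perm E) x) h
      simpa [hτe, hτperm] using this
    have h2 : τfun x ∈ B (tauIdx 0) := by
      rw [hτfun, glueFun_of_mem hBdisj cτ hx0]
      exact (cτ 0).maps x hx0
    rw [h1, tauIdx_even (Even.zero)] at h2
    exact Set.disjoint_left.1 (hBdisj (show (0 : ℤ) ≠ 0 + 1 by omega)) hx0 h2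
  -- the translation
  set φ : Equiv.Perm E := gperm * τperm * gperm⁻¹ * τperm with hφ
  have hφcoe : ⇑φ = ⇑gperm ∘ ⇑τperm ∘ ⇑gperm⁻¹ ∘ ⇑τperm := rfl
  have hτim : ∀ n : ℤ, ⇑τperm '' B n = B (tauIdx n) := by
    intro n
    exact glueFun_image hBdisj cτ n
  have hgim : ∀ n : ℤ, ⇑gperm '' B n = B (n + 1) := by
    intro n
    exact glueFun_image hBdisj cg n
  have hgim' : ∀ n : ℤ, ⇑gperm⁻¹ '' B n = B (n - 1) := by
    intro n
    exact glueFun'_image hBdisj cg hπρg n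
  have himg : ∀ t : ℤ, ⇑φ '' B (2 * t) = B (2 * t + 2) := by
    intro t
    have he : Even (2 * t) := ⟨t, two_mul t⟩
    have ho : ¬Even (2 * t + 1) := by simp [Int.even_add_one, he]
    rw [hφcoe]
    rw [Set.image_comp, Set.image_comp, Set.image_comp]
    rw [hτim, tauIdx_even he, hgim', hτim]
    have e1 : 2 * t + 1 - 1 = 2 * t := by ring
    rw [e1, tauIdx_even he, hgim]
    congr 1 <;> ring
  have hpow : ∀ m : ℤ, ⇑(φ ^ m) '' B 0 = B (2 * m) := by
    intro m
    induction m using Int.induction_on with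
    | zero =>
        rw [zpow_zero]
        have h0 : ⇑(1 : Equiv.Perm E) '' B 0 = B 0 := by simp
        rw [h0]
        congr 1 <;> ring
    | succ i ih =>
        have h1 : φ ^ ((i : ℤ) + 1) = φ * φ ^ (i : ℤ) := by
          rw [show ((i : ℤ) + 1) = 1 + (i : ℤ) by ring, zpow_add, zpow_one]
        have h2 : ⇑(φ * φ ^ (i : ℤ)) = ⇑φ ∘ ⇑(φ ^ (i : ℤ)) := rfl
        rw [h1, h2, Set.image_comp, ih, himg]
        congr 1 <;> ring
    | pred i ih =>
        have h1 : φ ^ (-(i : ℤ) - 1) = φ⁻¹ * φ ^ (-(i : ℤ)) := by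
          rw [show (-(i : ℤ) - 1) = (-1) + (-(i : ℤ)) by ring, zpow_add, zpow_neg_one]
        have h2 : ⇑(φ⁻¹ * φ ^ (-(i : ℤ))) = ⇑φ⁻¹ ∘ ⇑(φ ^ (-(i : ℤ))) := rfl
        have h3 : ⇑φ '' B (2 * (-(i : ℤ) - 1)) = B (2 * -(i : ℤ)) := by
          rw [himg]; congr 1; ring
        have h4 : ⇑φ⁻¹ '' B (2 * -(i : ℤ)) = B (2 * (-(i : ℤ) - 1)) := by
          rw [← h3]
          exact φ.symm_image_image _
        rw [h1, h2, Set.image_comp, ih, h4]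
  have htrans : IsHTranslation (B 0) φ := by
    intro m n hmn
    rw [hpow, hpow]
    exact hBdisj (show (2 * m : ℤ) ≠ 2 * n by omega)
  obtain ⟨z0, hz0B, hz0m⟩ := (hBcopy 0).exists_maximal hMne
  obtain ⟨z1, hz1B, hz1m⟩ := (hBcopy 1).exists_maximal hMne
  refine ⟨B 0, ⟨hBc 0, ⟨z0, hz0B, hz0m⟩, ?_⟩, τe, ge, hτsq, hτne, ?_⟩
  · constructor
    · exact Set.inter_subset_right
    · intro hsub
      have hmem : z1 ∈ B 0 ∩ MaxSet F := hsub hz1m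
      exact Set.disjoint_left.1 (hBdisj (show (0 : ℤ) ≠ 1 by omega)) hmem.1 hz1B
  · have hcoe : ((ge * τe * ge⁻¹ * τe : ↥(EndsHomeo F)) : Equiv.Perm E) = φ := rfl
    rw [hcoe]
    exact htrans
end

section
/- Let α be a countably infinite set. Then the symmetric group of all permutations of α is generated by the set of involutions σ (i.e., σ² = 1 and σ ≠ 1) whose support {x ∈ α : σ(x) ≠ x} is infinite and whose fixed-point set {x ∈ α : σ(x) = x} is infinite. -/
open Equiv Function

private lemma key_neg_pow {α : Type*} (π : Equiv.Perm α) (y : α) (a b : ℤ)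
    (h : (π ^ a) y = (π ^ b) y) : (π ^ (-a)) y = (π ^ (-b)) y := by
  have h0 : (π ^ (-b)) ((π ^ a) y) = y := by
    rw [h, zpow_neg]; exact Equiv.symm_apply_apply _ _
  have e1 : π ^ (-a) * π ^ (-b) * π ^ a = π ^ (-b) := by
    rw [← zpow_add, ← zpow_add]; congr 1; ring
  have h1 := DFunLike.congr_fun e1 y
  simp only [Equiv.Perm.mul_apply] at h1
  rw [h0] at h1
  exact h1

private lemma exists_two_sq_one {α : Type*} (π : Equiv.Perm α) :
    ∃ ρ σ : Equiv.Perm α, ρ ^ 2 = 1 ∧ σ ^ 2 = 1 ∧ π = ρ * σ := by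
  classical
  set s : Setoid α := Equiv.Perm.SameCycle.setoid π with hs
  let r : α → α := fun x => (Quotient.mk s x).out
  have hr : ∀ x, π.SameCycle (r x) x := fun x => Quotient.mk_out x
  have hrr : ∀ x y, π.SameCycle x y → r x = r y := fun x y h =>
    congrArg Quotient.out (Quotient.sound h)
  let k : α → ℤ := fun x => (hr x).choose
  have hk : ∀ x, (π ^ k x) (r x) = x := fun x => (hr x).choose_spec
  let f : α → α := fun x => (π ^ (-(k x))) (r x)
  have hfr : ∀ x, r (f x) = r x := by
    intro x
    exact (hrr (f x) x ((show π.SameCycle (r x) (f x) from ⟨-(k x), rfl⟩).symm.trans (hr x)))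
  have hinv : Involutive f := by
    intro x
    have h1 : (π ^ k (f x)) (r x) = (π ^ (-(k x))) (r x) := by
      have := hk (f x); rwa [hfr x] at this
    have h2 := key_neg_pow π (r x) (k (f x)) (-(k x)) h1
    rw [neg_neg] at h2
    show (π ^ (-(k (f x)))) (r (f x)) = x
    rw [hfr x, h2, hk x]
  have hconj : ∀ x, f (π x) = π⁻¹ (f x) := by
    intro x
    have hrpx : r (π x) = r x := hrr (π x) x ⟨-1, by simp⟩
    have h1 : (π ^ k (π x)) (r x) = (π ^ (1 + k x)) (r x) := by
      have h2 := hk (π x); rw [hrpx] at h2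
      rw [h2, zpow_add, zpow_one, Equiv.Perm.mul_apply, hk x]
    have h3 := key_neg_pow π (r x) (k (π x)) (1 + k x) h1
    show (π ^ (-(k (π x)))) (r (π x)) = _
    rw [hrpx, h3, neg_add, zpow_add, Equiv.Perm.mul_apply, zpow_neg_one]
  refine ⟨hinv.toPerm f, hinv.toPerm f * π, ?_, ?_, ?_⟩
  · ext x
    simp [sq, Equiv.Perm.mul_apply, Involutive.coe_toPerm, hinv x]
  · ext x
    simp only [sq, Equiv.Perm.mul_apply, Involutive.coe_toPerm, Equiv.Perm.one_apply]
    rw [hconj (f (π x)), hinv (π x)]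
    simp
  · have : hinv.toPerm f * hinv.toPerm f = 1 := by
      ext x; simp [Equiv.Perm.mul_apply, Involutive.coe_toPerm, hinv x]
    rw [← mul_assoc, this, one_mul]

private lemma exists_restr {α : Type*} (τ : Equiv.Perm α) (h2 : ∀ x, τ (τ x) = x)
    (C : Set α) (hinvC : ∀ x ∈ C, τ x ∈ C) (hmov : ∀ x ∈ C, τ x ≠ x)
    (hCinf : C.Infinite) (hcoinf : Cᶜ.Infinite) :
    ∃ σ : Equiv.Perm α,
      (σ ^ 2 = 1 ∧ σ ≠ 1 ∧ {x | σ x ≠ x}.Infinite ∧ {x | σ x = x}.Infinite)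
      ∧ (∀ x ∈ C, σ x = τ x) ∧ (∀ x ∉ C, σ x = x) := by
  classical
  have hg : Function.Involutive (fun x => if x ∈ C then τ x else x) := by
    intro x
    by_cases hx : x ∈ C
    · simp only [hx, if_true, hinvC x hx, if_pos (hinvC x hx)]
      exact h2 x
    · simp [hx]
  refine ⟨hg.toPerm _, ⟨?_, ?_, ?_, ?_⟩, fun x hx => ?_, fun x hx => ?_⟩
  · ext x
    simp only [sq, Equiv.Perm.mul_apply, Involutive.coe_toPerm, Equiv.Perm.one_apply]
    exact hg x
  · obtain ⟨a, ha⟩ := hCinf.nonempty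
    intro hcon
    have : (hg.toPerm _) a = a := by rw [hcon]; rfl
    rw [Involutive.coe_toPerm] at this
    simp only [ha, if_true] at this
    exact hmov a ha this
  · refine hCinf.mono ?_
    intro x hx
    show (hg.toPerm _) x ≠ x
    rw [Involutive.coe_toPerm]
    simp only [hx, if_true]
    exact hmov x hx
  · refine hcoinf.mono ?_
    intro x hx
    show (hg.toPerm _) x = x
    rw [Involutive.coe_toPerm]
    simp only [Set.mem_compl_iff] at hx
    simp [hx]
  · show (if x ∈ C then τ x else x) = τ x
    simp [hx]
  · show (if x ∈ C then τ x else x) = x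
    simp [hx]

private lemma sq_one_mem {α : Type*} [Countable α] [Infinite α] (τ : Equiv.Perm α)
    (hτ : τ ^ 2 = 1) :
    τ ∈ Subgroup.closure {σ : Equiv.Perm α |
      σ ^ 2 = 1 ∧ σ ≠ 1 ∧ {x | σ x ≠ x}.Infinite ∧ {x | σ x = x}.Infinite} := by
  classical
  have h2 : ∀ x, τ (τ x) = x := by
    intro x
    have := DFunLike.congr_fun hτ x
    simpa [sq, Equiv.Perm.mul_apply] using this
  by_cases h1 : τ = 1
  · rw [h1]; exact one_mem _
  set T : Set α := {x | τ x ≠ x} with hT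
  have hTinv : ∀ x ∈ T, τ x ∈ T := by
    intro x hx
    show τ (τ x) ≠ τ x
    rw [h2 x]
    exact fun h => hx h.symm
  by_cases hTi : T.Infinite
  · -- infinite support: split the support into two invariant infinite pieces
    have hrel : Equivalence (fun x y : α => y = x ∨ y = τ x) := by
      refine ⟨fun x => Or.inl rfl, ?_, ?_⟩
      · rintro x y (rfl | rfl)
        · exact Or.inl rfl
        · exact Or.inr (h2 x).symm
      · rintro x y z (rfl | rfl) (rfl | rfl)
        · exact Or.inl rfl
        · exact Or.inr rfl
        · exact Or.inr rfl
        · exact Or.inl (h2 x)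
    set s : Setoid α := ⟨_, hrel⟩ with hs
    let q : α → Quotient s := fun x => Quotient.mk s x
    have hq : ∀ x, q (τ x) = q x := by
      intro x
      refine Quotient.sound ?_
      exact Or.inr (h2 x).symm
    have hfib : ∀ x y : α, q y = q x → y = x ∨ y = τ x := by
      intro x y h
      have h' : x = y ∨ x = τ y := Quotient.exact h
      rcases h' with rfl | rfl
      · exact Or.inl rfl
      · exact Or.inr (h2 y).symm
    have hQT : (q '' T).Infinite := by
      intro hfin
      refine hTi ?_
      have : T ⊆ ⋃ c ∈ q '' T, {y | q y = c} := by
        intro x hx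
        exact Set.mem_biUnion (Set.mem_image_of_mem q hx) rfl
      refine Set.Finite.subset (Set.Finite.biUnion hfin ?_) this
      rintro c hc
      obtain ⟨t, _, rfl⟩ := hc
      refine Set.Finite.subset ((Set.finite_singleton (τ t)).insert t) ?_
      intro y hy
      rcases hfib t y hy with rfl | rfl
      · exact Set.mem_insert _ _
      · simp
    let uemb : ℕ ↪ ↥(q '' T) := Set.Infinite.natEmbedding _ hQT
    let u : ℕ → Quotient s := fun n => (uemb n).1
    have hu_mem : ∀ n, u n ∈ q '' T := fun n => (uemb n).2
    have hu_inj : Function.Injective u := fun n m h =>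
      uemb.injective (Subtype.val_injective h)
    set A : Set α := {x | x ∈ T ∧ ∃ n, q x = u (2 * n)} with hA
    set B : Set α := {x | x ∈ T ∧ ¬∃ n, q x = u (2 * n)} with hB
    have hAinv : ∀ x ∈ A, τ x ∈ A := by
      rintro x ⟨hxT, n, hn⟩
      exact ⟨hTinv x hxT, n, by rw [hq x]; exact hn⟩
    have hBinv : ∀ x ∈ B, τ x ∈ B := by
      rintro x ⟨hxT, hn⟩
      refine ⟨hTinv x hxT, ?_⟩
      rw [hq x]
      exact hn
    -- a sequence in A
    have hvex : ∀ n : ℕ, ∃ x, x ∈ T ∧ q x = u (2 * n) := by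
      intro n
      obtain ⟨x, hx, hxe⟩ := hu_mem (2 * n)
      exact ⟨x, hx, hxe⟩
    choose v hvT hvq using hvex
    have hvA : ∀ n, v n ∈ A := fun n => ⟨hvT n, n, hvq n⟩
    have hv_inj : Function.Injective v := by
      intro n m h
      have : u (2 * n) = u (2 * m) := by rw [← hvq n, ← hvq m, h]
      have := hu_inj this
      omega
    -- a sequence in B
    have hwex : ∀ n : ℕ, ∃ x, x ∈ T ∧ q x = u (2 * n + 1) := by
      intro n
      obtain ⟨x, hx, hxe⟩ := hu_mem (2 * n + 1)
      exact ⟨x, hx, hxe⟩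
    choose w hwT hwq using hwex
    have hwB : ∀ n, w n ∈ B := by
      intro n
      refine ⟨hwT n, ?_⟩
      rintro ⟨m, hm⟩
      rw [hwq n] at hm
      have := hu_inj hm
      omega
    have hw_inj : Function.Injective w := by
      intro n m h
      have : u (2 * n + 1) = u (2 * m + 1) := by rw [← hwq n, ← hwq m, h]
      have := hu_inj this
      omega
    have hAinf : A.Infinite := Set.infinite_of_injective_forall_mem hv_inj hvA
    have hBinf : B.Infinite := Set.infinite_of_injective_forall_mem hw_inj hwB
    have hAB : ∀ x, x ∈ A → x ∉ B := by
      rintro x ⟨_, hn⟩ ⟨_, hn'⟩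
      exact hn' hn
    have hAc : Aᶜ.Infinite := hBinf.mono (fun x hx => fun hxA => hAB x hxA hx)
    have hBc : Bᶜ.Infinite := hAinf.mono (fun x hx => fun hxB => hAB x hx hxB)
    obtain ⟨σA, hσA, hσA1, hσA2⟩ :=
      exists_restr τ h2 A hAinv (fun x hx => hx.1) hAinf hAc
    obtain ⟨σB, hσB, hσB1, hσB2⟩ :=
      exists_restr τ h2 B hBinv (fun x hx => hx.1) hBinf hBc
    have hτeq : τ = σA * σB := by
      ext x
      rw [Equiv.Perm.mul_apply]
      by_cases hxT : x ∈ T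
      · by_cases hxA : x ∈ A
        · rw [hσB2 x (hAB x hxA), hσA1 x hxA]
        · have hxB : x ∈ B := ⟨hxT, fun hn => hxA ⟨hxT, hn⟩⟩
          rw [hσB1 x hxB, hσA2 (τ x) (fun h => hAB (τ x) h (hBinv x hxB))]
      · have hx : τ x = x := not_not.mp hxT
        have hxA : x ∉ A := fun h => hxT h.1
        have hxB : x ∉ B := fun h => hxT h.1
        rw [hσB2 x hxB, hσA2 x hxA, hx]
    rw [hτeq]
    exact mul_mem (Subgroup.subset_closure hσA) (Subgroup.subset_closure hσB)
  · -- finite support: pad with a disjoint involution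
    rw [Set.not_infinite] at hTi
    set F : Set α := Tᶜ with hF
    have hFinf : F.Infinite := hTi.infinite_compl
    have hFfix : ∀ x ∈ F, τ x = x := fun x hx => not_not.mp hx
    haveI : Infinite F := hFinf.to_subtype
    obtain ⟨d⟩ := nonempty_denumerable F
    let e : F ≃ ℕ := d.eqv
    let m4 : ℕ → ℕ := fun n => if n % 4 = 0 then n + 1 else if n % 4 = 1 then n - 1 else n
    have hm4 : Function.Involutive m4 := by
      intro n
      simp only [m4]
      split_ifs <;> omega
    let g : α → α := fun x => if hx : x ∈ F then (e.symm (m4 (e ⟨x, hx⟩)) : α) else x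
    have hgF : ∀ x (hx : x ∈ F), g x = (e.symm (m4 (e ⟨x, hx⟩)) : α) := by
      intro x hx; simp only [g, dif_pos hx]
    have hgnF : ∀ x, x ∉ F → g x = x := by
      intro x hx; simp only [g, dif_neg hx]
    have hginv : Function.Involutive g := by
      intro x
      by_cases hx : x ∈ F
      · rw [hgF x hx]
        have hmem : (e.symm (m4 (e ⟨x, hx⟩)) : α) ∈ F := (e.symm (m4 (e ⟨x, hx⟩))).2
        rw [hgF _ hmem]
        have : (⟨(e.symm (m4 (e ⟨x, hx⟩)) : α), hmem⟩ : F) = e.symm (m4 (e ⟨x, hx⟩)) := rfl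
        rw [this, Equiv.apply_symm_apply, hm4, Equiv.symm_apply_apply]
      · rw [hgnF x hx, hgnF x hx]
    -- the sequences witnessing infinitude
    let vv : ℕ → α := fun n => (e.symm (4 * n) : α)
    have hvvF : ∀ n, vv n ∈ F := fun n => (e.symm (4 * n)).2
    have hvv_inj : Function.Injective vv := by
      intro n m h
      have := e.symm.injective (Subtype.val_injective h)
      omega
    have hgvv : ∀ n, g (vv n) = (e.symm (4 * n + 1) : α) := by
      intro n
      rw [hgF _ (hvvF n)]
      congr 1
      have h1 : (⟨(e.symm (4 * n) : α), hvvF n⟩ : F) = e.symm (4 * n) := rfl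
      rw [h1, Equiv.apply_symm_apply]
      congr 1
      simp only [m4]
      split_ifs <;> omega
    have hgvv_ne : ∀ n, g (vv n) ≠ vv n := by
      intro n h
      rw [hgvv n] at h
      have := e.symm.injective (Subtype.val_injective h)
      omega
    let ww : ℕ → α := fun n => (e.symm (4 * n + 2) : α)
    have hwwF : ∀ n, ww n ∈ F := fun n => (e.symm (4 * n + 2)).2
    have hww_inj : Function.Injective ww := by
      intro n m h
      have := e.symm.injective (Subtype.val_injective h)
      omega
    have hgww : ∀ n, g (ww n) = ww n := by
      intro n
      rw [hgF _ (hwwF n)]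
      have h1 : (⟨(e.symm (4 * n + 2) : α), hwwF n⟩ : F) = e.symm (4 * n + 2) := rfl
      rw [h1, Equiv.apply_symm_apply]
      have h2 : m4 (4 * n + 2) = 4 * n + 2 := by
        simp only [m4]; split_ifs <;> omega
      rw [h2]
    have hgFmem : ∀ x, x ∈ F → g x ∈ F := by
      intro x hx
      rw [hgF x hx]
      exact (e.symm (m4 (e ⟨x, hx⟩))).2
    set ρ : Equiv.Perm α := hginv.toPerm g with hρ
    have hρ_apply : ∀ x, ρ x = g x := fun x => rfl
    have hρ2 : ρ * ρ = 1 := by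
      ext x
      simp only [Equiv.Perm.mul_apply, Equiv.Perm.one_apply, hρ_apply]
      exact hginv x
    have hρS : ρ ^ 2 = 1 ∧ ρ ≠ 1 ∧ {x | ρ x ≠ x}.Infinite ∧ {x | ρ x = x}.Infinite := by
      refine ⟨by rw [sq]; exact hρ2, ?_, ?_, ?_⟩
      · intro h
        have := DFunLike.congr_fun h (vv 0)
        rw [hρ_apply] at this
        exact hgvv_ne 0 (by simpa using this)
      · exact Set.infinite_of_injective_forall_mem hvv_inj
          (fun n => by rw [Set.mem_setOf_eq, hρ_apply]; exact hgvv_ne n)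
      · exact Set.infinite_of_injective_forall_mem hww_inj
          (fun n => by rw [Set.mem_setOf_eq, hρ_apply]; exact hgww n)
    -- τ * ρ
    have hτρ_apply : ∀ x, (τ * ρ) x = τ (g x) := fun x => rfl
    have hτρS : (τ * ρ) ^ 2 = 1 ∧ (τ * ρ) ≠ 1 ∧
        {x | (τ * ρ) x ≠ x}.Infinite ∧ {x | (τ * ρ) x = x}.Infinite := by
      obtain ⟨x₀, hx₀⟩ : T.Nonempty := by
        rcases Set.eq_empty_or_nonempty T with h | h
        · exfalso
          refine h1 ?_
          ext x
          simp only [Equiv.Perm.one_apply]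
          by_contra hc
          exact absurd (Set.eq_empty_iff_forall_notMem.mp h x) (fun hh => hh hc)
        · exact h
      have hTF : ∀ x ∈ T, g x = x := fun x hx => hgnF x (fun h => h hx)
      refine ⟨?_, ?_, ?_, ?_⟩
      · ext x
        simp only [sq, Equiv.Perm.mul_apply, Equiv.Perm.one_apply, hρ_apply]
        by_cases hx : x ∈ F
        · have h3 : g x ∈ F := hgFmem x hx
          rw [hFfix _ h3, hginv x, hFfix _ hx]
        · rw [hgnF x hx]
          have hxT : x ∈ T := of_not_not hx
          have hτxT : τ x ∈ T := hTinv x hxT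
          rw [hgnF (τ x) (fun h => h hτxT), h2 x]
      · intro h
        have := DFunLike.congr_fun h x₀
        rw [hτρ_apply, hTF x₀ hx₀] at this
        exact hx₀ (by simpa using this)
      · refine Set.infinite_of_injective_forall_mem hvv_inj (fun n => ?_)
        rw [Set.mem_setOf_eq, hτρ_apply, hgvv n, hFfix _ (e.symm (4 * n + 1)).2]
        intro h
        have := e.symm.injective (Subtype.val_injective h)
        omega
      · refine Set.infinite_of_injective_forall_mem hww_inj (fun n => ?_)
        rw [Set.mem_setOf_eq, hτρ_apply, hgww n, hFfix _ (hwwF n)]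
    have hτeq : τ = (τ * ρ) * ρ := by
      rw [mul_assoc, hρ2, mul_one]
    rw [hτeq]
    exact mul_mem (Subgroup.subset_closure hτρS) (Subgroup.subset_closure hρS)

/-- The symmetric group on a countably infinite set is generated by the
involutions with infinite support and infinite fixed-point set. -/
theorem perm_generated_by_involutions_infinite_support_and_fixed
    {α : Type*} [Countable α] [Infinite α] :
    Subgroup.closure {σ : Equiv.Perm α |
      σ ^ 2 = 1 ∧ σ ≠ 1 ∧ {x | σ x ≠ x}.Infinite ∧ {x | σ x = x}.Infinite} = ⊤ := by
  rw [Subgroup.eq_top_iff']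
  intro π
  obtain ⟨ρ, σ, hρ, hσ, rfl⟩ := exists_two_sq_one π
  exact mul_mem (sq_one_mem ρ hρ) (sq_one_mem σ hσ)
end

section
/- Let G be a topological group whose underlying topological space is separable, let I be a set of cardinality 𝔠 = 2^{ℵ₀}, and suppose there is a surjective group homomorphism from G onto ⨁_{i ∈ I} ℚ. Then there exists a group homomorphism from G to the additive group ℚ that is not continuous when ℚ carries the discrete topology; in particular, G does not have the automatic continuity property. -/
open Cardinal

/-- Two locally constant functions agreeing on a dense set are equal. -/
lemma locConst_ext_on {X α : Type*} [TopologicalSpace X] {f g : X → α}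
    (hf : IsLocallyConstant f) (hg : IsLocallyConstant g) {s : Set X}
    (hs : Dense s) (h : ∀ x ∈ s, f x = g x) : f = g := by
  letI : TopologicalSpace α := ⊥
  haveI : DiscreteTopology α := ⟨rfl⟩
  exact Continuous.ext_on hs hf.continuous hg.continuous h

/-- A separable topological group surjecting onto `⨁_{i ∈ I} ℚ` with `#I = 𝔠`
admits a homomorphism to the discrete group `ℚ` which is not continuous
(equivalently, not locally constant); in particular it fails automatic
continuity. -/
theorem exists_discontinuous_hom_to_discrete_rat
    {G : Type*} [Group G] [TopologicalSpace G] [IsTopologicalGroup G]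
    [TopologicalSpace.SeparableSpace G] {I : Type*}
    (hI : Cardinal.mk I = Cardinal.continuum)
    (p : G → (I →₀ ℚ)) (hp : ∀ a b, p (a * b) = p a + p b)
    (hsurj : Function.Surjective p) :
    ∃ f : G → ℚ, (∀ a b, f (a * b) = f a + f b) ∧ ¬ IsLocallyConstant f := by
  by_contra hcon
  push_neg at hcon
  set F : (I → ℚ) → G → ℚ := fun g a => Finsupp.linearCombination ℚ g (p a) with hF
  have hadd : ∀ g a b, F g (a * b) = F g a + F g b := by
    intro g a b
    simp [hF, hp, map_add]
  have hlc : ∀ g, IsLocallyConstant (F g) := fun g => hcon _ (hadd g)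
  obtain ⟨s, hsc, hsd⟩ := TopologicalSpace.exists_countable_dense G
  have hinj : Function.Injective (fun g : I → ℚ => fun x : s => F g x) := by
    intro g g' h
    have heq : F g = F g' :=
      locConst_ext_on (hlc g) (hlc g') hsd (fun x hx => congrFun h ⟨x, hx⟩)
    funext i
    obtain ⟨a, ha⟩ := hsurj (Finsupp.single i 1)
    have := congrFun heq a
    simpa [hF, ha, Finsupp.linearCombination_single] using this
  have hle := Cardinal.lift_mk_le'.mpr ⟨⟨_, hinj⟩⟩
  have hq : #ℚ = ℵ₀ := Cardinal.mk_denumerable ℚ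
  have h2 : #(s → ℚ) ≤ Cardinal.continuum := by
    rw [Cardinal.mk_arrow, hq, Cardinal.lift_aleph0]
    calc (ℵ₀ : Cardinal) ^ (lift #(↥s)) ≤ (ℵ₀ : Cardinal) ^ (ℵ₀ : Cardinal) := by
          apply Cardinal.power_le_power_left Cardinal.aleph0_ne_zero
          simpa using hsc.le_aleph0
      _ = Cardinal.continuum := Cardinal.aleph0_power_aleph0
  have h3 : Cardinal.continuum < #(I → ℚ) := by
    rw [Cardinal.mk_arrow, hq, hI, Cardinal.lift_aleph0, Cardinal.lift_continuum]
    calc Cardinal.continuum < 2 ^ Cardinal.continuum := Cardinal.cantor _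
      _ ≤ (ℵ₀ : Cardinal) ^ Cardinal.continuum :=
          Cardinal.power_le_power_right (by simpa using (Cardinal.nat_lt_aleph0 2).le)
  have hfin := lt_of_lt_of_le (Cardinal.lift_lt.mpr h3)
      (hle.trans (Cardinal.lift_le.mpr h2))
  simp only [Cardinal.lift_continuum] at hfin
  exact lt_irrefl _ hfin
end
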